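/- arXiv:1603.00326 — 3 statements merged into one kernel-verified Lean document; each statement's English description precedes it below -/
import Mathlib

section
/- Let G be a graph in the class W₂ and S an independent set of G with |S| < α(G). Then the localization G_S is again in the class W₂. -/
open Finset
open Classical

noncomputable section

variable {V : Type*}

/-- An (abstract) simplicial complex on `V`, given as a finite set of finite faces:
nonvoid (contains the empty face) and closed under taking subsets. -/
def IsComplex (Δ : Finset (Finset V)) : Prop :=
  ∅ ∈ Δ ∧ ∀ F ∈ Δ, ∀ H ⊆ F, H ∈ Δ

/-- The reduced Euler characteristic `χ̃(Δ) = Σ_{F ∈ Δ} (-1)^{|F| - 1}`. -/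
def chiT (Δ : Finset (Finset V)) : ℤ :=
  ∑ F ∈ Δ, (-1 : ℤ) ^ (F.card + 1)

/-- The link of a face `F` in `Δ`. -/
def link (Δ : Finset (Finset V)) (F : Finset V) : Finset (Finset V) :=
  Δ.filter (fun H => H ∪ F ∈ Δ ∧ H ∩ F = ∅)

/-- The facets (maximal faces) of `Δ`. -/
def facets (Δ : Finset (Finset V)) : Finset (Finset V) :=
  Δ.filter (fun F => ∀ H ∈ Δ, F ⊆ H → F = H)

/-- `Δ` is pure: all facets have the same cardinality. -/
def PureC (Δ : Finset (Finset V)) : Prop :=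
  ∀ F ∈ facets Δ, ∀ H ∈ facets Δ, F.card = H.card

/-- One more than the dimension of `Δ`: the maximal cardinality of a face. -/
def maxCard (Δ : Finset (Finset V)) : ℕ := Δ.sup Finset.card

/-- The dimension of `Δ` as an integer (`-1` for `Δ = {∅}`). -/
def dimC (Δ : Finset (Finset V)) : ℤ := (maxCard Δ : ℤ) - 1

/-- `Δ` is an Euler complex: pure, and every link has reduced Euler characteristic
`(-1)^{dim}` (note `(-1)^{dim lk} = (-1)^{maxCard lk + 1}`). -/
def Eulerian (Δ : Finset (Finset V)) : Prop :=
  PureC Δ ∧ ∀ F ∈ Δ, chiT (link Δ F) = (-1 : ℤ) ^ (maxCard (link Δ F) + 1)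

/-- `Δ` is semi-Eulerian: the link of each vertex is Eulerian. -/
def SemiEulerian (Δ : Finset (Finset V)) : Prop :=
  ∀ x : V, {x} ∈ Δ → Eulerian (link Δ {x})

/-- The independence complex of a graph `G`: faces are the independent sets. -/
def indepC (G : SimpleGraph V) [Fintype V] : Finset (Finset V) :=
  Finset.univ.filter (fun s => ∀ a ∈ s, ∀ b ∈ s, ¬ G.Adj a b)

/-- The independence number `α(G)`. -/
def indNum (G : SimpleGraph V) [Fintype V] : ℕ := (indepC G).sup Finset.card

/-- `G` is well-covered: every maximal independent set has cardinality `α(G)`. -/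
def WellCovered (G : SimpleGraph V) [Fintype V] : Prop :=
  ∀ s ∈ indepC G, (∀ t ∈ indepC G, s ⊆ t → s = t) → s.card = indNum G

/-- The vertex set of the localization `G_S = G \ (S ∪ N_G(S))`. -/
def locSet (G : SimpleGraph V) (S : Finset V) : Set V :=
  {v | v ∉ S ∧ ∀ u ∈ S, ¬ G.Adj v u}

/-- The localization `G_S`, as an induced subgraph. -/
def locG (G : SimpleGraph V) (S : Finset V) : SimpleGraph (locSet G S) :=
  G.induce (locSet G S)

/-- The deletion `G ∖ v`, as an induced subgraph. -/
def Gdel (G : SimpleGraph V) (v : V) : SimpleGraph {u : V // u ≠ v} :=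
  G.induce {u | u ≠ v}

/-- `G` belongs to the class `W₂`: it is well-covered and for every vertex `v`,
`G ∖ v` is well-covered with `α(G ∖ v) = α(G)`. -/
def InW2 (G : SimpleGraph V) [Fintype V] : Prop :=
  WellCovered G ∧ ∀ v : V, WellCovered (Gdel G v) ∧ indNum (Gdel G v) = indNum G

/-- `δ*(v)`: the number of non-isolated vertices of the induced subgraph `H[N_H(v)]`. -/
def deltaStarV {T : Type*} (H : SimpleGraph T) [Fintype T] (v : T) : ℕ :=
  (Finset.univ.filter (fun u => H.Adj v u ∧ ∃ w, H.Adj v w ∧ H.Adj u w)).card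

/-- `2K₂`: two disjoint edges. -/
def twoK2 : SimpleGraph (Fin 4) := SimpleGraph.fromEdgeSet {s(0, 1), s(2, 3)}

/-- The join `G * H` of two disjoint graphs. -/
def joinG {α β : Type*} (G : SimpleGraph α) (H : SimpleGraph β) : SimpleGraph (α ⊕ β) where
  Adj x y :=
    match x, y with
    | Sum.inl a, Sum.inl b => G.Adj a b
    | Sum.inr a, Sum.inr b => H.Adj a b
    | Sum.inl _, Sum.inr _ => True
    | Sum.inr _, Sum.inl _ => True
  symm := ⟨by
    rintro (a | a) (b | b) h
    · exact G.adj_symm h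
    · trivial
    · trivial
    · exact H.adj_symm h⟩
  loopless := ⟨by
    rintro (a | a) h
    · exact G.irrefl h
    · exact H.irrefl h⟩

/-- `G` is pseudo-planar: for every independent set `S`, `δ*(G_S) ≤ 5` and
`G_S` is not isomorphic to `2K₂ * 2K₂`. -/
def PseudoPlanar (G : SimpleGraph V) [Fintype V] : Prop :=
  ∀ S ∈ indepC G,
    ((locSet G S).Nonempty → ∃ v : locSet G S, deltaStarV (locG G S) v ≤ 5) ∧
    IsEmpty (locG G S ≃g joinG twoK2 twoK2)

/-- `H` is a minor of `G`: there are disjoint nonempty connected branch sets in `G`,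
one for each vertex of `H`, with edges between branch sets of adjacent vertices. -/
def IsMinor {α β : Type*} (H : SimpleGraph β) (G : SimpleGraph α) : Prop :=
  ∃ B : β → Set α,
    (∀ u, (B u).Nonempty) ∧ (∀ u, (G.induce (B u)).Connected) ∧
    (∀ u w, u ≠ w → Disjoint (B u) (B w)) ∧
    (∀ u w, H.Adj u w → ∃ x ∈ B u, ∃ y ∈ B w, G.Adj x y)

def K5 : SimpleGraph (Fin 5) := ⊤

def K33 : SimpleGraph (Fin 3 ⊕ Fin 3) := completeBipartiteGraph (Fin 3) (Fin 3)

/-- Planarity via Wagner's theorem: no `K₅` minor and no `K_{3,3}` minor. -/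
def Planar (G : SimpleGraph V) : Prop := ¬ IsMinor K5 G ∧ ¬ IsMinor K33 G

/-- The 5-cycle on `Fin 5`. -/
def C5 : SimpleGraph (Fin 5) :=
  SimpleGraph.fromEdgeSet {s(0, 1), s(1, 2), s(2, 3), s(3, 4), s(4, 0)}

/-- A pentagon (5-cycle) with exactly one chord. -/
def pentChord : SimpleGraph (Fin 5) :=
  SimpleGraph.fromEdgeSet {s(0, 1), s(1, 2), s(2, 3), s(3, 4), s(4, 0), s(1, 3)}

/-- The bowtie: two triangles sharing exactly one vertex. -/
def bowtie : SimpleGraph (Fin 5) :=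
  SimpleGraph.fromEdgeSet {s(0, 1), s(1, 2), s(2, 0), s(1, 3), s(3, 4), s(4, 1)}

/-- The possible chords of the 5-cycle `C5`. -/
def chordSet : Finset (Sym2 (Fin 5)) := {s(0, 2), s(0, 3), s(1, 3), s(1, 4), s(2, 4)}

/-- The simplicial boundary map on chains (with coefficients in `k`),
sending `e_F ↦ Σ_{v ∈ F} (-1)^{pos of v in F} e_{F ∖ v}`. -/
def bdry (k : Type*) [Field k] [LinearOrder V] : (Finset V →₀ k) →ₗ[k] (Finset V →₀ k) :=
  Finsupp.lsum k fun F => (LinearMap.id : k →ₗ[k] k).smulRight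
    (∑ v ∈ F, ((-1 : k) ^ (F.filter (fun w => w < v)).card) • Finsupp.single (F.erase v) (1 : k))

/-- The submodule of `c`-chains of `Δ`: spanned by basis elements of faces of cardinality `c`. -/
def chainsSub (k : Type*) [Field k] (Δ : Finset (Finset V)) (c : ℕ) :
    Submodule k (Finset V →₀ k) :=
  Submodule.span k {x | ∃ F ∈ Δ, F.card = c ∧ x = Finsupp.single F (1 : k)}

/-- Vanishing of the reduced simplicial homology `H̃_{c-1}(Δ; k)`:
every cycle supported on faces of cardinality `c` is a boundary. -/
def HVanish (k : Type*) [Field k] [LinearOrder V] (Δ : Finset (Finset V)) (c : ℕ) : Prop :=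
  ∀ ω ∈ chainsSub k Δ c, bdry k ω = 0 → ∃ η ∈ chainsSub k Δ (c + 1), bdry k η = ω

/-- Cohen–Macaulayness of `Δ` over `k`, via Reisner's criterion:
`H̃_i(lk_Δ F; k) = 0` for all faces `F` and all `i < dim lk_Δ F`. -/
def IsCM (k : Type*) [Field k] [LinearOrder V] (Δ : Finset (Finset V)) : Prop :=
  ∀ F ∈ Δ, ∀ c : ℕ, (c : ℤ) - 1 < dimC (link Δ F) → HVanish k (link Δ F) c

/-- The core of `Δ`: the restriction of `Δ` to the vertices `x` with `st_Δ(x) ≠ Δ`. -/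
def coreC (Δ : Finset (Finset V)) : Finset (Finset V) :=
  Δ.filter (fun F => ∀ x ∈ F, ∃ H ∈ Δ, H ∪ {x} ∉ Δ)

/-- Gorensteinness of `Δ` over `k`, via Stanley's criterion:
`core Δ` is a Cohen–Macaulay Euler complex. -/
def IsGor (k : Type*) [Field k] [LinearOrder V] (Δ : Finset (Finset V)) : Prop :=
  IsCM k (coreC Δ) ∧ Eulerian (coreC Δ)

/-- Connectedness of `Δ` (all vertices of `V` being vertices of `Δ`):
its 1-skeleton graph is connected. -/
def ComplexConnected (Δ : Finset (Finset V)) : Prop :=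
  (SimpleGraph.fromRel fun a b => ({a, b} : Finset V) ∈ Δ).Connected

/-- `Δ` is connected in codimension one. -/
def ConnCodimOne (Δ : Finset (Finset V)) : Prop :=
  ∀ F ∈ facets Δ, ∀ H ∈ facets Δ,
    Relation.ReflTransGen
      (fun A B => A ∈ facets Δ ∧ B ∈ facets Δ ∧ (A ∩ B).card = maxCard Δ - 1) F H

/-- The graph obtained from `H` and a vertex `x` by adding new vertices `a, b, c`
(coded `0, 1, 2 : Fin 3`), joining `a` to `b` and to every neighbor of `x`,
`b` to `c`, and `c` to `x`. -/
def extGraph (H : SimpleGraph V) (x : V) : SimpleGraph (V ⊕ Fin 3) :=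
  SimpleGraph.fromRel fun p q =>
    match p, q with
    | Sum.inl u, Sum.inl w => H.Adj u w
    | Sum.inl u, Sum.inr i => (i = 0 ∧ H.Adj u x) ∨ (i = 2 ∧ u = x)
    | Sum.inr i, Sum.inr j => (i = 0 ∧ j = 1) ∨ (i = 1 ∧ j = 2)
    | Sum.inr _, Sum.inl _ => False

end

section Helpers

variable {V : Type*}

lemma mem_indepC_iff [Fintype V] {G : SimpleGraph V} {s : Finset V} :
    s ∈ indepC G ↔ ∀ a ∈ s, ∀ b ∈ s, ¬ G.Adj a b := by
  simp [indepC]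

lemma empty_mem_indepC [Fintype V] (G : SimpleGraph V) : (∅ : Finset V) ∈ indepC G := by
  simp [indepC]

lemma exists_maximal_indep [Fintype V] (G : SimpleGraph V) {s : Finset V}
    (hs : s ∈ indepC G) :
    ∃ t ∈ indepC G, s ⊆ t ∧ ∀ u ∈ indepC G, t ⊆ u → t = u := by
  classical
  obtain ⟨t, ht, htmax⟩ :=
    ((indepC G).filter (fun t => s ⊆ t)).exists_max_image Finset.card
      ⟨s, by simp [hs]⟩
  rw [Finset.mem_filter] at ht
  refine ⟨t, ht.1, ht.2, fun u hu htu => ?_⟩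
  have hu' : u ∈ (indepC G).filter (fun t => s ⊆ t) := by
    rw [Finset.mem_filter]; exact ⟨hu, ht.2.trans htu⟩
  exact Finset.eq_of_subset_of_card_le htu (htmax u hu')

lemma indNum_attained [Fintype V] (G : SimpleGraph V) :
    ∃ s ∈ indepC G, s.card = indNum G := by
  obtain ⟨s, hs, h⟩ := Finset.exists_mem_eq_sup (indepC G) ⟨∅, empty_mem_indepC G⟩ Finset.card
  exact ⟨s, hs, h.symm⟩

lemma locAdj {G : SimpleGraph V} {S : Finset V} {a b : ↥(locSet G S)} :
    (locG G S).Adj a b ↔ G.Adj a b := Iff.rfl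

/-- Key lemma: every maximal independent set of the localization `G_S` has
cardinality `α(G) - |S|` (if `G` is well-covered). -/
lemma loc_maximal_card [Fintype V] {G : SimpleGraph V} (hwc : WellCovered G)
    {S : Finset V} (hS : S ∈ indepC G) {t : Finset ↥(locSet G S)}
    (ht : t ∈ indepC (locG G S)) (hmax : ∀ u ∈ indepC (locG G S), t ⊆ u → t = u) :
    t.card + S.card = indNum G := by
  classical
  set t' : Finset V := t.map ⟨Subtype.val, Subtype.val_injective⟩ with ht'def
  have hmem : ∀ w : V, w ∈ t' ↔ ∃ h : w ∈ locSet G S, (⟨w, h⟩ : ↥(locSet G S)) ∈ t := by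
    intro w
    simp only [ht'def, Finset.mem_map, Function.Embedding.coeFn_mk]
    constructor
    · rintro ⟨a, ha, rfl⟩; exact ⟨a.2, ha⟩
    · rintro ⟨h, hm⟩; exact ⟨⟨w, h⟩, hm, rfl⟩
  have htS : Disjoint t' S := by
    rw [Finset.disjoint_left]
    intro w hw hwS
    obtain ⟨hloc, -⟩ := (hmem w).mp hw
    exact hloc.1 hwS
  have hti := mem_indepC_iff.mp ht
  have hSi := mem_indepC_iff.mp hS
  have hind : t' ∪ S ∈ indepC G := by
    rw [mem_indepC_iff]
    intro a ha b hb hab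
    rw [Finset.mem_union] at ha hb
    rcases ha with ha | ha <;> rcases hb with hb | hb
    · obtain ⟨hla, hma⟩ := (hmem a).mp ha
      obtain ⟨hlb, hmb⟩ := (hmem b).mp hb
      exact hti ⟨a, hla⟩ hma ⟨b, hlb⟩ hmb hab
    · obtain ⟨hla, -⟩ := (hmem a).mp ha
      exact hla.2 b hb hab
    · obtain ⟨hlb, -⟩ := (hmem b).mp hb
      exact hlb.2 a ha hab.symm
    · exact hSi a ha b hb hab
  have hmax' : ∀ u ∈ indepC G, t' ∪ S ⊆ u → t' ∪ S = u := by
    intro u hu hsub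
    by_contra hne
    obtain ⟨w, hwu, hwn⟩ := Finset.exists_of_ssubset (Finset.ssubset_iff_subset_ne.mpr ⟨hsub, hne⟩)
    have hui := mem_indepC_iff.mp hu
    have hwS : w ∉ S := fun h => hwn (Finset.mem_union_right _ h)
    have hwloc : w ∈ locSet G S := by
      refine ⟨hwS, fun x hx hadj => ?_⟩
      exact hui w hwu x (hsub (Finset.mem_union_right _ hx)) hadj
    have hwt : (⟨w, hwloc⟩ : ↥(locSet G S)) ∉ t := by
      intro h
      exact hwn (Finset.mem_union_left _ ((hmem w).mpr ⟨hwloc, h⟩))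
    have hnew : insert (⟨w, hwloc⟩ : ↥(locSet G S)) t ∈ indepC (locG G S) := by
      rw [mem_indepC_iff]
      intro a ha b hb hab
      rw [Finset.mem_insert] at ha hb
      have hval : ∀ c : ↥(locSet G S), c ∈ t → (c : V) ∈ u := by
        intro c hc
        exact hsub (Finset.mem_union_left _ ((hmem c).mpr ⟨c.2, hc⟩))
      rcases ha with rfl | ha <;> rcases hb with rfl | hb
      · exact (locG G S).irrefl hab
      · exact hui w hwu b (hval b hb) hab
      · exact hui (a : V) (hval a ha) w hwu hab
      · exact hti a ha b hb hab
    have := hmax _ hnew (Finset.subset_insert _ t)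
    exact hwt (this ▸ Finset.mem_insert_self _ t)
  have hcard := hwc _ hind hmax'
  rwa [Finset.card_union_of_disjoint htS, Finset.card_map] at hcard

lemma wc_loc [Fintype V] {G : SimpleGraph V} (hwc : WellCovered G)
    {S : Finset V} (hS : S ∈ indepC G) :
    WellCovered (locG G S) ∧ indNum (locG G S) + S.card = indNum G := by
  classical
  have hnum : indNum (locG G S) + S.card = indNum G := by
    obtain ⟨s₀, hs₀, hcs₀⟩ := indNum_attained (locG G S)
    obtain ⟨t, ht, hst, htmax⟩ := exists_maximal_indep (locG G S) hs₀
    have h1 := loc_maximal_card hwc hS ht htmax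
    obtain ⟨t₀, ht₀, -, ht₀max⟩ := exists_maximal_indep (locG G S) (empty_mem_indepC _)
    have h2 := loc_maximal_card hwc hS ht₀ ht₀max
    have hle : indNum (locG G S) ≤ t.card := hcs₀ ▸ Finset.card_le_card hst
    have hge : t₀.card ≤ indNum (locG G S) := Finset.le_sup ht₀
    omega
  refine ⟨fun s hs hmax => ?_, hnum⟩
  have := loc_maximal_card hwc hS hs hmax
  omega

lemma indepC_map {α β : Type*} [Fintype α] [Fintype β] {G : SimpleGraph α}
    {H : SimpleGraph β} (e : G ≃g H) {s : Finset α} (hs : s ∈ indepC G) :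
    s.map e.toEquiv.toEmbedding ∈ indepC H := by
  rw [mem_indepC_iff]
  intro a ha b hb hab
  simp only [Finset.mem_map, Equiv.coe_toEmbedding] at ha hb
  obtain ⟨x, hx, rfl⟩ := ha
  obtain ⟨y, hy, rfl⟩ := hb
  exact mem_indepC_iff.mp hs x hx y hy (e.map_adj_iff.mp hab)

lemma indNum_le_iso {α β : Type*} [Fintype α] [Fintype β] {G : SimpleGraph α}
    {H : SimpleGraph β} (e : G ≃g H) : indNum G ≤ indNum H := by
  apply Finset.sup_le
  intro s hs
  have := Finset.le_sup (f := Finset.card) (indepC_map e hs)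
  simpa [indNum] using this

/-- Transfer of `indNum` and `WellCovered` along a graph isomorphism. -/
lemma transfer {α β : Type*} [Fintype α] [Fintype β] {G : SimpleGraph α}
    {H : SimpleGraph β} (e : G ≃g H) :
    indNum G = indNum H ∧ (WellCovered H → WellCovered G) := by
  classical
  have hnum : indNum G = indNum H := le_antisymm (indNum_le_iso e) (indNum_le_iso e.symm)
  have hcomp : ∀ u : Finset β,
      (u.map e.symm.toEquiv.toEmbedding).map e.toEquiv.toEmbedding = u := by
    intro u; ext b
    simp only [Finset.mem_map, Equiv.coe_toEmbedding]
    constructor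
    · rintro ⟨x, ⟨y, hy, rfl⟩, rfl⟩
      simpa using hy
    · intro hb; exact ⟨e.symm b, ⟨b, hb, rfl⟩, by simp⟩
  refine ⟨hnum, fun hwH s hs hmax => ?_⟩
  set s' := s.map e.toEquiv.toEmbedding with hs'def
  have hs' : s' ∈ indepC H := indepC_map e hs
  have hmax' : ∀ u ∈ indepC H, s' ⊆ u → s' = u := by
    intro u hu hsub
    have hu' := indepC_map e.symm hu
    have hsub' : s ⊆ u.map e.symm.toEquiv.toEmbedding := by
      intro x hx
      simp only [Finset.mem_map, Equiv.coe_toEmbedding]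
      refine ⟨e x, hsub ?_, by simp⟩
      simp only [hs'def, Finset.mem_map, Equiv.coe_toEmbedding]
      exact ⟨x, hx, rfl⟩
    have := hmax _ hu' hsub'
    rw [hs'def, this, hcomp]
  have := hwH s' hs' hmax'
  rw [hs'def, Finset.card_map] at this
  rw [this, hnum]

lemma wc_irrel {α : Type*} {G : SimpleGraph α} {i j : Fintype α}
    (h : @WellCovered α G i) : @WellCovered α G j := by
  rwa [Subsingleton.elim j i]

lemma indNum_irrel {α : Type*} {G : SimpleGraph α} {i j : Fintype α} :
    @indNum α G i = @indNum α G j := by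
  rw [Subsingleton.elim j i]

end Helpers

set_option maxHeartbeats 2000000 in
theorem stmt_3 {V : Type*} [Fintype V] (G : SimpleGraph V) (hG : InW2 G)
    (S : Finset V) (hS : S ∈ indepC G) (hlt : S.card < indNum G) :
    InW2 (locG G S) := by
  obtain ⟨hw, hdel⟩ := hG
  obtain ⟨hwloc, hcard⟩ := wc_loc hw hS
  refine ⟨hwloc, fun v => ?_⟩
  set v₀ : V := (v : V) with hv₀def
  have hv0 : v₀ ∉ S := v.2.1
  set S' : Finset {u : V // u ≠ v₀} := S.subtype (fun u => u ≠ v₀) with hS'def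
  have hmemS' : ∀ w : {u : V // u ≠ v₀}, w ∈ S' ↔ (w : V) ∈ S := by
    intro w; simp [hS'def]
  have hcardS' : S'.card = S.card := by
    rw [hS'def, Finset.card_subtype, Finset.filter_true_of_mem]
    intro x hx h
    exact hv0 (h ▸ hx)
  have hS' : S' ∈ indepC (Gdel G v₀) := by
    rw [mem_indepC_iff]
    intro a ha b hb hab
    exact mem_indepC_iff.mp hS a ((hmemS' a).mp ha) b ((hmemS' b).mp hb) hab
  -- the isomorphism (G_S) ∖ v ≅ (G ∖ v)_{S'}
  have e : Gdel (locG G S) v ≃g locG (Gdel G v₀) S' :=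
    { toFun := fun a =>
        ⟨⟨(a : ↥(locSet G S)), fun h => a.2 (Subtype.ext h)⟩,
         ⟨fun hin => (a : ↥(locSet G S)).2.1 ((hmemS' _).mp hin),
          fun u hu hadj => (a : ↥(locSet G S)).2.2 u.1 ((hmemS' u).mp hu) hadj⟩⟩
      invFun := fun b =>
        ⟨⟨(b : {u : V // u ≠ v₀}),
          ⟨fun hin => b.2.1 ((hmemS' (b : {u : V // u ≠ v₀})).mpr hin),
           fun u hu hadj => b.2.2 ⟨u, fun h => hv0 (h ▸ hu)⟩
             ((hmemS' ⟨u, fun h => hv0 (h ▸ hu)⟩).mpr hu) hadj⟩⟩,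
         fun h => (b : {u : V // u ≠ v₀}).2 (congrArg Subtype.val h)⟩
      left_inv := fun a => rfl
      right_inv := fun b => rfl
      map_rel_iff' := Iff.rfl }
  obtain ⟨hwcdel, hnumdel⟩ := hdel v₀
  obtain ⟨hwB, hcardB⟩ := wc_loc hwcdel hS'
  obtain ⟨hnum_eq, hwc_tr⟩ := transfer e
  have hnumdel' : indNum (Gdel G v₀) = indNum G := indNum_irrel.trans hnumdel
  have h2 : indNum (Gdel (locG G S) v) = indNum (locG G S) := by
    rw [hnum_eq]
    omega
  exact ⟨wc_irrel (hwc_tr hwB), indNum_irrel.trans h2⟩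
end

section
/- Every planar graph is pseudo-planar: for every independent set S of a planar graph G, the localization G_S satisfies δ*(G_S) ≤ 5 and G_S is not isomorphic to the join 2K₂ * 2K₂. -/
open Finset
open Classical

namespace PPlanar
noncomputable section
open Finset SimpleGraph Classical

variable {V : Type*}

lemma conn_singleton (G : SimpleGraph V) (a : V) : (G.induce ({a} : Set V)).Connected := by
  constructor
  intro u v
  have : u = v := Subtype.ext (by
    have hu := u.2; have hv := v.2
    simp only [Set.mem_singleton_iff] at hu hv; rw [hu, hv])
  exact this ▸ SimpleGraph.Reachable.refl u

lemma conn_pair (G : SimpleGraph V) {a b : V} (h : G.Adj a b) :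
    (G.induce ({a, b} : Set V)).Connected := by
  rw [SimpleGraph.connected_iff_exists_forall_reachable]
  have ha : a ∈ ({a, b} : Set V) := by simp
  refine ⟨⟨a, ha⟩, ?_⟩
  rintro ⟨w, hw⟩
  rcases hw with h1 | h2
  · subst h1; exact SimpleGraph.Reachable.refl _
  · simp only [Set.mem_singleton_iff] at h2
    have hadj : (G.induce ({a, b} : Set V)).Adj ⟨a, ha⟩ ⟨w, by simp [h2]⟩ := by
      show G.Adj a w
      rwa [h2]
    exact hadj.reachable

/-- transfer a minor along a graph embedding -/
lemma isMinor_map {α β γ : Type*} {K : SimpleGraph γ} {G : SimpleGraph α} {G' : SimpleGraph β}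
    (f : G ↪g G') (h : IsMinor K G) : IsMinor K G' := by
  obtain ⟨B, hne, hconn, hdisj, hadj⟩ := h
  refine ⟨fun u => f '' (B u), fun u => (hne u).image f, ?_, ?_, ?_⟩
  · intro u
    let hom : G.induce (B u) →g G'.induce (f '' (B u)) :=
      { toFun := fun x => ⟨f x.1, ⟨x.1, x.2, rfl⟩⟩
        map_rel' := by
          rintro ⟨x, hx⟩ ⟨y, hy⟩ hxy
          exact f.map_rel_iff.mpr hxy }
    have hsurj : Function.Surjective hom := by
      rintro ⟨w, ⟨x, hx, rfl⟩⟩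
      exact ⟨⟨x, hx⟩, Subtype.ext rfl⟩
    exact SimpleGraph.Connected.map hom hsurj (hconn u)
  · intro u w huw
    exact Set.disjoint_image_of_injective f.injective (hdisj u w huw)
  · intro u w huw
    obtain ⟨x, hx, y, hy, hxy⟩ := hadj u w huw
    exact ⟨f x, ⟨x, hx, rfl⟩, f y, ⟨y, hy, rfl⟩, f.map_rel_iff.mpr hxy⟩

lemma isMinor_of_induce {α γ : Type*} {K : SimpleGraph γ} {G : SimpleGraph α} {s : Set α}
    (h : IsMinor K (G.induce s)) : IsMinor K G :=
  isMinor_map (SimpleGraph.Embedding.induce s) h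

lemma isMinor_mono {α γ : Type*} {K : SimpleGraph γ} {G G' : SimpleGraph α}
    (hle : G ≤ G') (h : IsMinor K G) : IsMinor K G' := by
  obtain ⟨B, hne, hconn, hdisj, hadj⟩ := h
  refine ⟨B, hne, ?_, hdisj, ?_⟩
  · intro u
    refine SimpleGraph.Connected.mono ?_ (hconn u)
    intro x y hxy
    exact hle hxy
  · intro u w huw
    obtain ⟨x, hx, y, hy, hxy⟩ := hadj u w huw
    exact ⟨x, hx, y, hy, hle hxy⟩

end
end PPlanar
namespace PPlanar
noncomputable section
open Finset SimpleGraph Classical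

variable {V : Type*}

/-- degree of `v` into `s` -/
def degS (G : SimpleGraph V) (s : Finset V) (v : V) : ℕ := (s.filter (fun u => G.Adj v u)).card

/-- twice the number of edges inside `s` -/
def eS (G : SimpleGraph V) (s : Finset V) : ℕ := ∑ v ∈ s, degS G s v

lemma degS_mono {G : SimpleGraph V} {s t : Finset V} (h : s ⊆ t) (v : V) :
    degS G s v ≤ degS G t v :=
  Finset.card_le_card (Finset.filter_subset_filter _ h)

lemma degS_lt_card {G : SimpleGraph V} {s : Finset V} {v : V} (hv : v ∈ s) :
    degS G s v < s.card := by
  apply Finset.card_lt_card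
  constructor
  · exact Finset.filter_subset _ _
  · intro hsub
    have := hsub hv
    simp only [Finset.mem_filter] at this
    exact G.irrefl this.2

lemma eS_insert (G : SimpleGraph V) {v : V} {t : Finset V} (hv : v ∉ t) :
    eS G (insert v t) = eS G t + 2 * degS G t v := by
  unfold eS
  rw [Finset.sum_insert hv]
  have h1 : degS G (insert v t) v = degS G t v := by
    unfold degS
    rw [Finset.filter_insert, if_neg (show ¬ G.Adj v v from G.irrefl)]
  have h2 : ∀ u ∈ t, degS G (insert v t) u = degS G t u + (if G.Adj u v then 1 else 0) := by
    intro u hu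
    unfold degS
    rw [Finset.filter_insert]
    by_cases h : G.Adj u v
    · rw [if_pos h, Finset.card_insert_of_notMem (fun hmem => hv (Finset.mem_of_mem_filter v hmem)), if_pos h]
    · rw [if_neg h, if_neg h, add_zero]
  rw [Finset.sum_congr rfl h2, Finset.sum_add_distrib]
  simp only [Finset.sum_boole, Nat.cast_id]
  have h3 : t.filter (fun u => G.Adj u v) = t.filter (fun u => G.Adj v u) := by
    apply Finset.filter_congr
    intro u _
    simp [SimpleGraph.adj_comm]
  rw [h1]
  unfold degS
  rw [h3]
  omega

lemma degS_erase (G : SimpleGraph V) (s : Finset V) (v : V) :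
    degS G (s.erase v) v = degS G s v := by
  unfold degS
  rw [Finset.filter_erase, Finset.erase_eq_of_notMem]
  intro h
  exact G.irrefl (Finset.mem_filter.mp h).2

lemma eS_erase (G : SimpleGraph V) {s : Finset V} {v : V} (hv : v ∈ s) :
    eS G s = eS G (s.erase v) + 2 * degS G s v := by
  conv_lhs => rw [← Finset.insert_erase hv]
  rw [eS_insert G (Finset.notMem_erase v s), degS_erase]

lemma eS_even (G : SimpleGraph V) (s : Finset V) : Even (eS G s) := by
  induction s using Finset.induction_on with
  | empty => simp [eS]
  | insert _ _ h ih =>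
    rw [eS_insert G h]
    exact ih.add (even_two_mul _)

lemma sum_split (f : V → ℕ) {s : Finset V} {x y : V} (hx : x ∈ s) (hy : y ∈ s) (hxy : x ≠ y) :
    ∑ v ∈ s, f v = f x + f y + ∑ v ∈ (s.erase x).erase y, f v := by
  rw [← Finset.add_sum_erase _ f hx, ← Finset.add_sum_erase _ f
    (Finset.mem_erase.mpr ⟨Ne.symm hxy, hy⟩)]
  omega

end
end PPlanar
namespace PPlanar
noncomputable section
open Finset SimpleGraph Classical

variable {V : Type*}

lemma eS_deleteEdge (G : SimpleGraph V) {s : Finset V} {x y : V}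
    (hx : x ∈ s) (hy : y ∈ s) (hadj : G.Adj x y) :
    eS (G.deleteEdges {s(x,y)}) s + 2 = eS G s := by
  have hxy : x ≠ y := hadj.ne
  set G' := G.deleteEdges {s(x,y)} with hG'
  have hadj' : ∀ a b, G'.Adj a b ↔ G.Adj a b ∧ ¬(a = x ∧ b = y ∨ a = y ∧ b = x) := by
    intro a b
    rw [hG', SimpleGraph.deleteEdges_adj]
    simp [Sym2.eq_iff]
  have dA : degS G' s x + 1 = degS G s x := by
    have hset : s.filter (fun u => G'.Adj x u) = (s.filter (fun u => G.Adj x u)).erase y := by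
      ext u
      simp only [Finset.mem_erase, Finset.mem_filter, hadj']
      constructor
      · intro h
        exact ⟨fun e => h.2.2 (Or.inl ⟨True.intro, e⟩), h.1, h.2.1⟩
      · rintro ⟨hne, hus, hu⟩
        refine ⟨hus, hu, ?_⟩
        rintro (⟨-, h2⟩ | ⟨h1, -⟩)
        · exact hne h2
        · exact hxy h1
    have hymem : y ∈ s.filter (fun u => G.Adj x u) := Finset.mem_filter.mpr ⟨hy, hadj⟩
    have hpos : 0 < (s.filter (fun u => G.Adj x u)).card := Finset.card_pos.mpr ⟨y, hymem⟩
    unfold degS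
    have h' := congrArg Finset.card hset
    rw [Finset.card_erase_of_mem hymem] at h'
    have key : ∀ n, n = (s.filter (fun u => G.Adj x u)).card - 1 →
        n + 1 = (s.filter (fun u => G.Adj x u)).card := fun n hn => by omega
    convert key _ h' using 3
    ext u
    simp only [Finset.mem_filter]
  have dB : degS G' s y + 1 = degS G s y := by
    have hset : s.filter (fun u => G'.Adj y u) = (s.filter (fun u => G.Adj y u)).erase x := by
      ext u
      simp only [Finset.mem_erase, Finset.mem_filter, hadj']
      constructor
      · intro h
        exact ⟨fun e => h.2.2 (Or.inr ⟨True.intro, e⟩), h.1, h.2.1⟩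
      · rintro ⟨hne, hus, hu⟩
        refine ⟨hus, hu, ?_⟩
        rintro (⟨h1, -⟩ | ⟨-, h2⟩)
        · exact hxy h1.symm
        · exact hne h2
    have hxmem : x ∈ s.filter (fun u => G.Adj y u) := Finset.mem_filter.mpr ⟨hx, hadj.symm⟩
    have hpos : 0 < (s.filter (fun u => G.Adj y u)).card := Finset.card_pos.mpr ⟨x, hxmem⟩
    unfold degS
    have h' := congrArg Finset.card hset
    rw [Finset.card_erase_of_mem hxmem] at h'
    have key : ∀ n, n = (s.filter (fun u => G.Adj y u)).card - 1 →
        n + 1 = (s.filter (fun u => G.Adj y u)).card := fun n hn => by omega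
    convert key _ h' using 3
    ext u
    simp only [Finset.mem_filter]
  have dC : ∀ v ∈ (s.erase x).erase y, degS G' s v = degS G s v := by
    intro v hv
    obtain ⟨hvy, hvx, hvs⟩ : v ≠ y ∧ v ≠ x ∧ v ∈ s := by
      simp only [Finset.mem_erase] at hv; tauto
    unfold degS
    apply congrArg
    ext u
    simp only [Finset.mem_filter]
    refine and_congr_right (fun _ => ?_)
    rw [hadj' v u]
    constructor
    · exact fun h => h.1
    · intro h
      refine ⟨h, ?_⟩
      rintro (⟨rfl, rfl⟩ | ⟨rfl, rfl⟩)
      · exact hvx rfl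
      · exact hvy rfl
  have e1 : eS G' s = degS G' s x + degS G' s y + ∑ v ∈ (s.erase x).erase y, degS G' s v :=
    sum_split _ hx hy hxy
  have e2 : eS G s = degS G s x + degS G s y + ∑ v ∈ (s.erase x).erase y, degS G s v :=
    sum_split _ hx hy hxy
  have e3 : ∑ v ∈ (s.erase x).erase y, degS G' s v = ∑ v ∈ (s.erase x).erase y, degS G s v :=
    Finset.sum_congr rfl dC
  omega

/-- contract the edge x–y, folding y's neighbours onto x (y becomes irrelevant) -/
def conG (G : SimpleGraph V) (x y : V) : SimpleGraph V where
  Adj a b := (G.Adj a b ∨ (a = x ∧ G.Adj y b ∧ b ≠ x) ∨ (b = x ∧ G.Adj a y ∧ a ≠ x)) ∧ a ≠ b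
  symm := ⟨by
    rintro a b ⟨h | ⟨h1, h2, h3⟩ | ⟨h1, h2, h3⟩, hne⟩
    · exact ⟨Or.inl h.symm, hne.symm⟩
    · exact ⟨Or.inr (Or.inr ⟨h1, h2.symm, h3⟩), hne.symm⟩
    · exact ⟨Or.inr (Or.inl ⟨h1, h2.symm, h3⟩), hne.symm⟩⟩
  loopless := ⟨fun a h => h.2 rfl⟩

lemma conG_adj (G : SimpleGraph V) (x y a b : V) :
    (conG G x y).Adj a b ↔
      (G.Adj a b ∨ (a = x ∧ G.Adj y b ∧ b ≠ x) ∨ (b = x ∧ G.Adj a y ∧ a ≠ x)) ∧ a ≠ b :=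
  Iff.rfl

lemma conG_adj_left (G : SimpleGraph V) (x y u : V) :
    (conG G x y).Adj x u ↔ (G.Adj x u ∨ G.Adj y u) ∧ u ≠ x := by
  rw [conG_adj]
  constructor
  · rintro ⟨h | ⟨-, h2, h3⟩ | ⟨rfl, -, h3⟩, hne⟩
    · exact ⟨Or.inl h, Ne.symm hne⟩
    · exact ⟨Or.inr h2, h3⟩
    · exact absurd rfl h3
  · rintro ⟨h | h, hux⟩
    · exact ⟨Or.inl h, h.ne⟩
    · exact ⟨Or.inr (Or.inl ⟨rfl, h, hux⟩), fun e => hux e.symm⟩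

lemma conG_adj_other (G : SimpleGraph V) (x y : V) {v : V} (hvx : v ≠ x) (u : V) :
    (conG G x y).Adj v u ↔ (G.Adj v u ∨ (u = x ∧ G.Adj v y)) := by
  rw [conG_adj]
  constructor
  · rintro ⟨h | ⟨rfl, -, -⟩ | ⟨rfl, h2, -⟩, hne⟩
    · exact Or.inl h
    · exact absurd rfl hvx
    · exact Or.inr ⟨rfl, h2⟩
  · rintro (h | ⟨rfl, h⟩)
    · exact ⟨Or.inl h, h.ne⟩
    · exact ⟨Or.inr (Or.inr ⟨rfl, h, hvx⟩), hvx⟩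

lemma eS_conG (G : SimpleGraph V) {s : Finset V} {x y : V}
    (hx : x ∈ s) (hy : y ∈ s) (hadj : G.Adj x y) :
    eS (conG G x y) (s.erase y) + 2 * (s.filter (fun u => G.Adj x u ∧ G.Adj y u)).card + 2
      = eS G s := by
  have hxy : x ≠ y := hadj.ne
  set C := s.filter (fun u => G.Adj x u ∧ G.Adj y u) with hC
  set s' := s.erase y with hs'
  set t := (s.erase y).erase x with ht
  have hxs' : x ∈ s' := by rw [hs']; exact Finset.mem_erase.mpr ⟨hxy, hx⟩
  have hCt : C ⊆ t := by
    intro u hu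
    rw [hC, Finset.mem_filter] at hu
    rw [ht, Finset.mem_erase, Finset.mem_erase]
    exact ⟨hu.2.1.ne', ⟨hu.2.2.ne', hu.1⟩⟩
  -- Step A : degree of x in the contraction
  have hA : degS (conG G x y) s' x + C.card + 2 = degS G s x + degS G s y := by
    have hT : s'.filter (fun u => (conG G x y).Adj x u)
        = t.filter (fun u => G.Adj x u ∨ G.Adj y u) := by
      ext u
      simp only [Finset.mem_filter, conG_adj_left, ht, hs', Finset.mem_erase]
      tauto
    have hunion : t.filter (fun u => G.Adj x u ∨ G.Adj y u)
        = t.filter (fun u => G.Adj x u) ∪ t.filter (fun u => G.Adj y u) :=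
      Finset.filter_or _ _ _
    have hinter : t.filter (fun u => G.Adj x u) ∩ t.filter (fun u => G.Adj y u) = C := by
      rw [← Finset.filter_and]
      ext u
      simp only [Finset.mem_filter, ht, hs', Finset.mem_erase, hC]
      constructor
      · rintro ⟨⟨hux, huy, hus⟩, h1, h2⟩
        exact ⟨hus, h1, h2⟩
      · rintro ⟨hus, h1, h2⟩
        exact ⟨⟨h1.ne', h2.ne', hus⟩, h1, h2⟩
    have c1 : (t.filter (fun u => G.Adj x u)).card + 1 = degS G s x := by
      have : t.filter (fun u => G.Adj x u) = (s.filter (fun u => G.Adj x u)).erase y := by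
        rw [ht, Finset.filter_erase, Finset.filter_erase]
        apply Finset.erase_eq_of_notMem
        intro h
        exact G.irrefl ((Finset.mem_filter.mp (Finset.mem_of_mem_erase h)).2)
      have hymem : y ∈ s.filter (fun u => G.Adj x u) := Finset.mem_filter.mpr ⟨hy, hadj⟩
      have hpos : 0 < (s.filter (fun u => G.Adj x u)).card := Finset.card_pos.mpr ⟨y, hymem⟩
      unfold degS
      rw [this, Finset.card_erase_of_mem hymem]
      omega
    have c2 : (t.filter (fun u => G.Adj y u)).card + 1 = degS G s y := by
      have h0 : t.filter (fun u => G.Adj y u) = (s.filter (fun u => G.Adj y u)).erase x := by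
        rw [ht, Finset.filter_erase, Finset.filter_erase]
        congr 1
        apply Finset.erase_eq_of_notMem
        intro h
        exact G.irrefl (Finset.mem_filter.mp h).2
      have hxmem : x ∈ s.filter (fun u => G.Adj y u) := Finset.mem_filter.mpr ⟨hx, hadj.symm⟩
      have hpos : 0 < (s.filter (fun u => G.Adj y u)).card := Finset.card_pos.mpr ⟨x, hxmem⟩
      unfold degS
      rw [h0, Finset.card_erase_of_mem hxmem]
      omega
    have hcui := Finset.card_union_add_card_inter
      (t.filter (fun u => G.Adj x u)) (t.filter (fun u => G.Adj y u))
    rw [hinter] at hcui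
    have hdeg : degS (conG G x y) s' x
        = (t.filter (fun u => G.Adj x u) ∪ t.filter (fun u => G.Adj y u)).card := by
      unfold degS
      rw [hT, hunion]
    omega
  -- Step B : degrees of the other vertices
  have hB : ∀ v ∈ t, degS (conG G x y) s' v + (if v ∈ C then 1 else 0) = degS G s v := by
    intro v hv
    obtain ⟨hvx, hvy, hvs⟩ : v ≠ x ∧ v ≠ y ∧ v ∈ s := by
      rw [ht] at hv
      simp only [Finset.mem_erase] at hv
      tauto
    have hfilter : s'.filter (fun u => (conG G x y).Adj v u)
        = s'.filter (fun u => G.Adj v u ∨ (u = x ∧ G.Adj v y)) := by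
      apply Finset.filter_congr
      intro u _
      rw [conG_adj_other G x y hvx u]
    by_cases hvyadj : G.Adj v y
    · by_cases hvxadj : G.Adj v x
      · have hvC : v ∈ C := by
          rw [hC, Finset.mem_filter]
          exact ⟨hvs, hvxadj.symm, hvyadj.symm⟩
        rw [if_pos hvC]
        have hset : s'.filter (fun u => G.Adj v u ∨ (u = x ∧ G.Adj v y))
            = (s.filter (fun u => G.Adj v u)).erase y := by
          ext u
          simp only [Finset.mem_filter, Finset.mem_erase, hs']
          constructor
          · rintro ⟨⟨huy, hus⟩, h | ⟨rfl, -⟩⟩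
            · exact ⟨huy, hus, h⟩
            · exact ⟨huy, hus, hvxadj⟩
          · rintro ⟨huy, hus, h⟩
            exact ⟨⟨huy, hus⟩, Or.inl h⟩
        have hymem : y ∈ s.filter (fun u => G.Adj v u) := Finset.mem_filter.mpr ⟨hy, hvyadj⟩
        have hpos : 0 < (s.filter (fun u => G.Adj v u)).card := Finset.card_pos.mpr ⟨y, hymem⟩
        unfold degS
        rw [hfilter, hset, Finset.card_erase_of_mem hymem]
        omega
      · have hvC : v ∉ C := by
          rw [hC, Finset.mem_filter]
          rintro ⟨-, h2, -⟩
          exact hvxadj h2.symm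
        rw [if_neg hvC]
        have hset : s'.filter (fun u => G.Adj v u ∨ (u = x ∧ G.Adj v y))
            = insert x ((s.filter (fun u => G.Adj v u)).erase y) := by
          ext u
          simp only [Finset.mem_filter, Finset.mem_erase, Finset.mem_insert, hs']
          constructor
          · rintro ⟨⟨huy, hus⟩, h | ⟨rfl, -⟩⟩
            · exact Or.inr ⟨huy, hus, h⟩
            · exact Or.inl rfl
          · rintro (rfl | ⟨huy, hus, h⟩)
            · exact ⟨⟨hxy, hx⟩, Or.inr ⟨rfl, hvyadj⟩⟩
            · exact ⟨⟨huy, hus⟩, Or.inl h⟩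
        have hxnot : x ∉ (s.filter (fun u => G.Adj v u)).erase y := by
          intro h
          exact hvxadj (Finset.mem_filter.mp (Finset.mem_of_mem_erase h)).2
        have hymem : y ∈ s.filter (fun u => G.Adj v u) := Finset.mem_filter.mpr ⟨hy, hvyadj⟩
        have hpos : 0 < (s.filter (fun u => G.Adj v u)).card := Finset.card_pos.mpr ⟨y, hymem⟩
        unfold degS
        rw [hfilter, hset, Finset.card_insert_of_notMem hxnot,
          Finset.card_erase_of_mem hymem]
        omega
    · have hvC : v ∉ C := by
        rw [hC, Finset.mem_filter]
        rintro ⟨-, -, h3⟩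
        exact hvyadj h3.symm
      rw [if_neg hvC]
      have hset : s'.filter (fun u => G.Adj v u ∨ (u = x ∧ G.Adj v y))
          = s.filter (fun u => G.Adj v u) := by
        ext u
        simp only [Finset.mem_filter, Finset.mem_erase, hs']
        constructor
        · rintro ⟨⟨huy, hus⟩, h | ⟨rfl, hh⟩⟩
          · exact ⟨hus, h⟩
          · exact absurd hh hvyadj
        · rintro ⟨hus, h⟩
          refine ⟨⟨?_, hus⟩, Or.inl h⟩
          rintro rfl
          exact hvyadj h
      unfold degS
      rw [hfilter, hset]
      omega
  -- assemble
  have e1 : eS (conG G x y) s' = degS (conG G x y) s' x + ∑ v ∈ t, degS (conG G x y) s' v := by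
    rw [eS, ← Finset.add_sum_erase _ _ hxs', ht, hs']
  have e2 : ∑ v ∈ t, (degS (conG G x y) s' v + if v ∈ C then 1 else 0)
      = ∑ v ∈ t, degS G s v := Finset.sum_congr rfl hB
  rw [Finset.sum_add_distrib] at e2
  have e3 : ∑ v ∈ t, (if v ∈ C then 1 else 0) = C.card := by
    rw [Finset.sum_boole, Nat.cast_id]
    congr 1
    rw [Finset.filter_mem_eq_inter, Finset.inter_eq_right.mpr hCt]
  have e4 : eS G s = degS G s y + degS G s x + ∑ v ∈ t, degS G s v := by
    rw [eS, ht]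
    exact sum_split _ hy hx (Ne.symm hxy)
  omega

end
end PPlanar
namespace PPlanar
noncomputable section
open Finset SimpleGraph Classical

variable {V : Type*}

/-- a K5-minor with branch sets inside `s` -/
def MinorW (G : SimpleGraph V) (s : Finset V) : Prop :=
  ∃ B : Fin 5 → Finset V, (∀ i, B i ⊆ s) ∧ (∀ i, (B i).Nonempty) ∧
    (∀ i, (G.induce (↑(B i) : Set V)).Connected) ∧
    (∀ i j, i ≠ j → Disjoint (B i) (B j)) ∧
    (∀ i j, i ≠ j → ∃ a ∈ B i, ∃ b ∈ B j, G.Adj a b)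

lemma MinorW.isMinor {G : SimpleGraph V} {s : Finset V} (h : MinorW G s) : IsMinor K5 G := by
  obtain ⟨B, hsub, hne, hconn, hdisj, hadj⟩ := h
  refine ⟨fun i => ↑(B i), fun i => Finset.coe_nonempty.mpr (hne i), hconn, ?_, ?_⟩
  · intro u w huw
    exact Finset.disjoint_coe.mpr (hdisj u w huw)
  · intro u w huw
    obtain ⟨a, ha, b, hb, hab⟩ := hadj u w huw.ne
    exact ⟨a, Finset.mem_coe.mpr ha, b, Finset.mem_coe.mpr hb, hab⟩

lemma MinorW.mono_set {G : SimpleGraph V} {s s' : Finset V} (hss : s ⊆ s')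
    (h : MinorW G s) : MinorW G s' := by
  obtain ⟨B, hsub, h2, h3, h4, h5⟩ := h
  exact ⟨B, fun i => (hsub i).trans hss, h2, h3, h4, h5⟩

lemma MinorW.mono_graph {G G' : SimpleGraph V} {s : Finset V} (hle : G ≤ G')
    (h : MinorW G s) : MinorW G' s := by
  obtain ⟨B, hsub, h2, h3, h4, h5⟩ := h
  refine ⟨B, hsub, h2, ?_, h4, ?_⟩
  · intro i
    exact SimpleGraph.Connected.mono (fun a b hab => hle hab) (h3 i)
  · intro i j hij
    obtain ⟨a, ha, b, hb, hab⟩ := h5 i j hij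
    exact ⟨a, ha, b, hb, hle hab⟩

lemma reach_transfer {H G : SimpleGraph V} {U W : Set V} (hUW : U ⊆ W)
    (hstep : ∀ a b (ha : a ∈ U) (hb : b ∈ U), H.Adj a b →
      (G.induce W).Reachable ⟨a, hUW ha⟩ ⟨b, hUW hb⟩) :
    ∀ (u v : U), (H.induce U).Reachable u v →
      (G.induce W).Reachable ⟨u.1, hUW u.2⟩ ⟨v.1, hUW v.2⟩ := by
  intro u v huv
  obtain ⟨w⟩ := huv
  induction w with
  | nil => exact SimpleGraph.Reachable.refl _
  | @cons a c v hac p ih => exact (hstep a.1 c.1 a.2 c.2 hac).trans ih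

lemma minorW_conG {G : SimpleGraph V} {s : Finset V} {x y : V}
    (hadj : G.Adj x y) (hx : x ∈ s) (hy : y ∈ s)
    (h : MinorW (conG G x y) (s.erase y)) : MinorW G s := by
  obtain ⟨B, hsub, hne, hconn, hdisj, hBadj⟩ := h
  have hynotB : ∀ i, y ∉ B i := fun i hyB => (Finset.mem_erase.mp (hsub i hyB)).1 rfl
  have memIf : ∀ k c, c ∈ B k → c ∈ (if x ∈ B k then insert y (B k) else B k) := by
    intro k c hc
    split
    · exact Finset.mem_insert_of_mem hc
    · exact hc
  refine ⟨fun i => if x ∈ B i then insert y (B i) else B i, ?_, ?_, ?_, ?_, ?_⟩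
  · intro i
    by_cases hxB : x ∈ B i
    · beta_reduce; rw [if_pos hxB]
      intro u hu
      rcases Finset.mem_insert.mp hu with rfl | hu'
      · exact hy
      · exact Finset.mem_of_mem_erase (hsub i hu')
    · beta_reduce; rw [if_neg hxB]
      exact fun u hu => Finset.mem_of_mem_erase (hsub i hu)
  · intro i
    by_cases hxB : x ∈ B i
    · beta_reduce; rw [if_pos hxB]; exact Finset.insert_nonempty _ _
    · beta_reduce; rw [if_neg hxB]; exact hne i
  · intro i
    by_cases hxB : x ∈ B i
    · beta_reduce; rw [if_pos hxB]
      have hyW : y ∈ (↑(insert y (B i)) : Set V) := by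
        rw [Finset.coe_insert]; exact Set.mem_insert _ _
      have hUW : (↑(B i) : Set V) ⊆ (↑(insert y (B i)) : Set V) := by
        rw [Finset.coe_insert]; exact Set.subset_insert _ _
      have hxW : x ∈ (↑(insert y (B i)) : Set V) := hUW (Finset.mem_coe.mpr hxB)
      have hstep : ∀ a b (ha : a ∈ (↑(B i) : Set V)) (hb : b ∈ (↑(B i) : Set V)),
          (conG G x y).Adj a b →
          (G.induce (↑(insert y (B i)) : Set V)).Reachable ⟨a, hUW ha⟩ ⟨b, hUW hb⟩ := by
        intro a b ha hb hab
        rw [conG_adj] at hab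
        obtain ⟨h1 | ⟨rfl, h2, -⟩ | ⟨rfl, h2, -⟩, -⟩ := hab
        · have : (G.induce (↑(insert y (B i)) : Set V)).Adj ⟨a, hUW ha⟩ ⟨b, hUW hb⟩ := h1
          exact this.reachable
        · have r1 : (G.induce (↑(insert y (B i)) : Set V)).Adj ⟨a, hUW ha⟩ ⟨y, hyW⟩ := hadj
          have r2 : (G.induce (↑(insert y (B i)) : Set V)).Adj ⟨y, hyW⟩ ⟨b, hUW hb⟩ := h2
          exact r1.reachable.trans r2.reachable
        · have r1 : (G.induce (↑(insert y (B i)) : Set V)).Adj ⟨a, hUW ha⟩ ⟨y, hyW⟩ := h2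
          have r2 : (G.induce (↑(insert y (B i)) : Set V)).Adj ⟨y, hyW⟩ ⟨b, hUW hb⟩ := hadj.symm
          exact r1.reachable.trans r2.reachable
      rw [SimpleGraph.connected_iff_exists_forall_reachable]
      refine ⟨⟨x, hxW⟩, ?_⟩
      rintro ⟨w, hw⟩
      have hwcases : w = y ∨ w ∈ B i := by
        have := hw
        rw [Finset.coe_insert] at this
        rcases this with h | h
        · exact Or.inl h
        · exact Or.inr (Finset.mem_coe.mp h)
      rcases hwcases with rfl | hwB
      · exact SimpleGraph.Adj.reachable (by exact hadj)
      · have hr := (hconn i).preconnected ⟨x, Finset.mem_coe.mpr hxB⟩ ⟨w, Finset.mem_coe.mpr hwB⟩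
        exact reach_transfer hUW hstep _ _ hr
    · beta_reduce; rw [if_neg hxB]
      refine SimpleGraph.Connected.mono ?_ (hconn i)
      intro a b hab
      have hax : (a : V) ≠ x := fun e => hxB (e ▸ Finset.mem_coe.mp a.2)
      have hbx : (b : V) ≠ x := fun e => hxB (e ▸ Finset.mem_coe.mp b.2)
      rcases (conG_adj G x y a b).mp hab with ⟨h1 | ⟨e, -, -⟩ | ⟨e, -, -⟩, -⟩
      · exact h1
      · exact absurd e hax
      · exact absurd e hbx
  · intro i j hij
    have hdij := hdisj i j hij
    by_cases hxi : x ∈ B i <;> by_cases hxj : x ∈ B j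
    · exact absurd hxj (Finset.disjoint_left.mp hdij hxi)
    · beta_reduce; rw [if_pos hxi, if_neg hxj, Finset.disjoint_insert_left]
      exact ⟨hynotB j, hdij⟩
    · beta_reduce; rw [if_neg hxi, if_pos hxj, Finset.disjoint_insert_right]
      exact ⟨hynotB i, hdij⟩
    · beta_reduce; rw [if_neg hxi, if_neg hxj]; exact hdij
  · intro i j hij
    obtain ⟨a, ha, b, hb, hab⟩ := hBadj i j hij
    rcases (conG_adj G x y a b).mp hab with ⟨h1 | ⟨rfl, h2, -⟩ | ⟨rfl, h2, -⟩, -⟩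
    · exact ⟨a, memIf i a ha, b, memIf j b hb, h1⟩
    · exact ⟨y, by beta_reduce; rw [if_pos ha]; exact Finset.mem_insert_self _ _, b, memIf j b hb, h2⟩
    · exact ⟨a, memIf i a ha, y, by beta_reduce; rw [if_pos hb]; exact Finset.mem_insert_self _ _, h2.symm.symm⟩

end
end PPlanar
namespace PPlanar
noncomputable section
open Finset SimpleGraph Classical

variable {V : Type*}

lemma minorW_of_points {G : SimpleGraph V} {s : Finset V} (w : Fin 5 → V)
    (hmem : ∀ i, w i ∈ s) (hadj : ∀ i j, i ≠ j → G.Adj (w i) (w j)) : MinorW G s := by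
  refine ⟨fun i => {w i}, ?_, ?_, ?_, ?_, ?_⟩
  · intro i
    beta_reduce
    intro z hz
    rw [Finset.mem_singleton] at hz
    rw [hz]; exact hmem i
  · intro i; exact ⟨w i, Finset.mem_singleton_self _⟩
  · intro i
    beta_reduce
    rw [Finset.coe_singleton]
    exact conn_singleton G (w i)
  · intro i j hij
    beta_reduce
    rw [Finset.disjoint_singleton]
    exact (hadj i j hij).ne
  · intro i j hij
    exact ⟨w i, Finset.mem_singleton_self _, w j, Finset.mem_singleton_self _, hadj i j hij⟩

lemma minorW_core {G : SimpleGraph V} {s t : Finset V} {v : V} (hvs : v ∈ s)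
    (hts : t ⊆ s) (hvt : v ∉ t) (htadj : ∀ u ∈ t, G.Adj v u)
    (hcard : t.card = 4 ∨ t.card = 5)
    (hmin : ∀ u ∈ t, 3 ≤ (t.filter (fun w => G.Adj u w)).card) :
    MinorW G s := by
  rcases hcard with h4 | h5
  · -- t is a clique on 4 vertices
    have hcomplete : ∀ u ∈ t, ∀ z ∈ t, u ≠ z → G.Adj u z := by
      intro u hu z hz huz
      have hsub : t.filter (fun w => G.Adj u w) ⊆ t.erase u := by
        intro q hq
        exact Finset.mem_erase.mpr ⟨((Finset.mem_filter.mp hq).2).ne',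
          (Finset.mem_filter.mp hq).1⟩
      have hcarde : (t.erase u).card = 3 := by rw [Finset.card_erase_of_mem hu, h4]
      have heq : t.filter (fun w => G.Adj u w) = t.erase u :=
        Finset.eq_of_subset_of_card_le hsub (by rw [hcarde]; exact hmin u hu)
      have hzmem : z ∈ t.filter (fun w => G.Adj u w) := by
        rw [heq]; exact Finset.mem_erase.mpr ⟨Ne.symm huz, hz⟩
      exact (Finset.mem_filter.mp hzmem).2
    obtain ⟨a, ha⟩ := Finset.card_pos.mp (show 0 < t.card by omega)
    obtain ⟨b, hb⟩ := Finset.card_pos.mp (show 0 < (t.erase a).card by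
      rw [Finset.card_erase_of_mem ha]; omega)
    obtain ⟨c, hc⟩ := Finset.card_pos.mp (show 0 < ((t.erase a).erase b).card by
      rw [Finset.card_erase_of_mem hb, Finset.card_erase_of_mem ha]; omega)
    obtain ⟨d, hd⟩ := Finset.card_pos.mp (show 0 < (((t.erase a).erase b).erase c).card by
      rw [Finset.card_erase_of_mem hc, Finset.card_erase_of_mem hb,
        Finset.card_erase_of_mem ha]; omega)
    have hbt : b ∈ t := Finset.mem_of_mem_erase hb
    have hba : b ≠ a := (Finset.mem_erase.mp hb).1
    have hct : c ∈ t := Finset.mem_of_mem_erase (Finset.mem_of_mem_erase hc)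
    have hcb : c ≠ b := (Finset.mem_erase.mp hc).1
    have hca : c ≠ a := (Finset.mem_erase.mp (Finset.mem_of_mem_erase hc)).1
    have hdt : d ∈ t :=
      Finset.mem_of_mem_erase (Finset.mem_of_mem_erase (Finset.mem_of_mem_erase hd))
    have hdc : d ≠ c := (Finset.mem_erase.mp hd).1
    have hdb : d ≠ b := (Finset.mem_erase.mp (Finset.mem_of_mem_erase hd)).1
    have hda : d ≠ a :=
      (Finset.mem_erase.mp (Finset.mem_of_mem_erase (Finset.mem_of_mem_erase hd))).1
    have h01 : G.Adj v a := htadj a ha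
    have h02 : G.Adj v b := htadj b hbt
    have h03 : G.Adj v c := htadj c hct
    have h04 : G.Adj v d := htadj d hdt
    have h12 : G.Adj a b := hcomplete a ha b hbt (Ne.symm hba)
    have h13 : G.Adj a c := hcomplete a ha c hct (Ne.symm hca)
    have h14 : G.Adj a d := hcomplete a ha d hdt (Ne.symm hda)
    have h23 : G.Adj b c := hcomplete b hbt c hct (Ne.symm hcb)
    have h24 : G.Adj b d := hcomplete b hbt d hdt (Ne.symm hdb)
    have h34 : G.Adj c d := hcomplete c hct d hdt (Ne.symm hdc)
    apply minorW_of_points ![v, a, b, c, d]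
    · intro i
      fin_cases i
      · exact hvs
      · exact hts ha
      · exact hts hbt
      · exact hts hct
      · exact hts hdt
    · intro i j hij
      fin_cases i <;> fin_cases j <;> simp_all [G.adj_comm]
  · -- |t| = 5 : find a universal vertex p of t
    have hp : ∃ p ∈ t, ∀ z ∈ t, z ≠ p → G.Adj p z := by
      by_contra hnp
      push_neg at hnp
      have hall3 : ∀ u ∈ t, (t.filter (fun w => G.Adj u w)).card = 3 := by
        intro u hu
        obtain ⟨z, hzt, hzne, hznadj⟩ := hnp u hu
        have hsub : t.filter (fun w => G.Adj u w) ⊆ (t.erase u).erase z := by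
          intro q hq
          obtain ⟨hqt, hquadj⟩ := Finset.mem_filter.mp hq
          refine Finset.mem_erase.mpr ⟨?_, Finset.mem_erase.mpr ⟨hquadj.ne', hqt⟩⟩
          rintro rfl
          exact hznadj hquadj
        have hle := Finset.card_le_card hsub
        have hcarde : ((t.erase u).erase z).card = 3 := by
          rw [Finset.card_erase_of_mem (Finset.mem_erase.mpr ⟨hzne, hzt⟩),
            Finset.card_erase_of_mem hu, h5]
        have := hmin u hu
        omega
      have h15 : eS G t = 15 := by
        have hsum : eS G t = ∑ u ∈ t, 3 := by
          apply Finset.sum_congr rfl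
          intro u hu
          exact hall3 u hu
        rw [hsum, Finset.sum_const, h5]
        norm_num
      have hev := eS_even G t
      rw [h15] at hev
      exact (by decide : ¬ Even 15) hev
    obtain ⟨p, hpt, hpuniv⟩ := hp
    have hMcard : (t.erase p).card = 4 := by rw [Finset.card_erase_of_mem hpt, h5]
    have hM2 : ∀ u ∈ t.erase p, 2 ≤ ((t.erase p).filter (fun w => G.Adj u w)).card := by
      intro u hu
      have h3c := hmin u (Finset.mem_of_mem_erase hu)
      have hsub : t.filter (fun w => G.Adj u w)
          ⊆ insert p ((t.erase p).filter (fun w => G.Adj u w)) := by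
        intro z hz
        obtain ⟨hzt, hzadj⟩ := Finset.mem_filter.mp hz
        by_cases hzp : z = p
        · rw [hzp]; exact Finset.mem_insert_self _ _
        · exact Finset.mem_insert_of_mem
            (Finset.mem_filter.mpr ⟨Finset.mem_erase.mpr ⟨hzp, hzt⟩, hzadj⟩)
      have := Finset.card_le_card hsub
      have := Finset.card_insert_le p ((t.erase p).filter (fun w => G.Adj u w))
      omega
    obtain ⟨a, haM⟩ := Finset.card_pos.mp (show 0 < (t.erase p).card by omega)
    have h2a := hM2 a haM
    obtain ⟨b, hbF⟩ := Finset.card_pos.mp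
      (show 0 < ((t.erase p).filter (fun w => G.Adj a w)).card by omega)
    obtain ⟨c, hcF⟩ := Finset.card_pos.mp
      (show 0 < (((t.erase p).filter (fun w => G.Adj a w)).erase b).card by
        rw [Finset.card_erase_of_mem hbF]; omega)
    have hcb : c ≠ b := (Finset.mem_erase.mp hcF).1
    have hcF' : c ∈ (t.erase p).filter (fun w => G.Adj a w) := Finset.mem_of_mem_erase hcF
    have hbM : b ∈ t.erase p := (Finset.mem_filter.mp hbF).1
    have hcM : c ∈ t.erase p := (Finset.mem_filter.mp hcF').1
    have hab : G.Adj a b := (Finset.mem_filter.mp hbF).2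
    have hac : G.Adj a c := (Finset.mem_filter.mp hcF').2
    have hba : b ≠ a := hab.ne'
    have hca : c ≠ a := hac.ne'
    obtain ⟨d, hd⟩ := Finset.card_pos.mp
      (show 0 < ((((t.erase p).erase a).erase b).erase c).card by
        have e1 := Finset.card_erase_of_mem haM
        have e2 : b ∈ (t.erase p).erase a := Finset.mem_erase.mpr ⟨hba, hbM⟩
        have e3 := Finset.card_erase_of_mem e2
        have e4 : c ∈ ((t.erase p).erase a).erase b :=
          Finset.mem_erase.mpr ⟨hcb, Finset.mem_erase.mpr ⟨hca, hcM⟩⟩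
        have e5 := Finset.card_erase_of_mem e4
        omega)
    have hdc : d ≠ c := (Finset.mem_erase.mp hd).1
    have hdb : d ≠ b := (Finset.mem_erase.mp (Finset.mem_of_mem_erase hd)).1
    have hda : d ≠ a :=
      (Finset.mem_erase.mp (Finset.mem_of_mem_erase (Finset.mem_of_mem_erase hd))).1
    have hdM : d ∈ t.erase p :=
      Finset.mem_of_mem_erase (Finset.mem_of_mem_erase (Finset.mem_of_mem_erase hd))
    -- M = {a, b, c, d}
    have hMeq : t.erase p = {a, b, c, d} := by
      symm
      apply Finset.eq_of_subset_of_card_le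
      · intro z hz
        simp only [Finset.mem_insert, Finset.mem_singleton] at hz
        rcases hz with rfl | rfl | rfl | rfl
        · exact haM
        · exact hbM
        · exact hcM
        · exact hdM
      · have hc4 : ({a, b, c, d} : Finset V).card = 4 := by
          rw [Finset.card_insert_of_notMem (by simp [hba.symm, hca.symm, hda.symm]),
            Finset.card_insert_of_notMem (by simp [hcb.symm, hdb.symm]),
            Finset.card_insert_of_notMem (by simp [hdc.symm]), Finset.card_singleton]
        omega
    -- distinctness of everything
    have hat : a ∈ t := Finset.mem_of_mem_erase haM
    have hbt : b ∈ t := Finset.mem_of_mem_erase hbM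
    have hct : c ∈ t := Finset.mem_of_mem_erase hcM
    have hdt : d ∈ t := Finset.mem_of_mem_erase hdM
    have hap : a ≠ p := (Finset.mem_erase.mp haM).1
    have hbp : b ≠ p := (Finset.mem_erase.mp hbM).1
    have hcp : c ≠ p := (Finset.mem_erase.mp hcM).1
    have hdp : d ≠ p := (Finset.mem_erase.mp hdM).1
    have hva : G.Adj v a := htadj a hat
    have hvb : G.Adj v b := htadj b hbt
    have hvc : G.Adj v c := htadj c hct
    have hvd : G.Adj v d := htadj d hdt
    have hvp : G.Adj v p := htadj p hpt
    have hpa : G.Adj p a := hpuniv a hat hap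
    have hpb : G.Adj p b := hpuniv b hbt hbp
    have hpc : G.Adj p c := hpuniv c hct hcp
    have hpd : G.Adj p d := hpuniv d hdt hdp
    by_cases hbc : G.Adj b c
    · apply minorW_of_points ![v, p, a, b, c]
      · intro i
        fin_cases i
        · exact hvs
        · exact hts hpt
        · exact hts hat
        · exact hts hbt
        · exact hts hct
      · intro i j hij
        fin_cases i <;> fin_cases j
        · exact absurd rfl hij
        · exact hvp
        · exact hva
        · exact hvb
        · exact hvc
        · exact hvp.symm
        · exact absurd rfl hij
        · exact hpa
        · exact hpb
        · exact hpc
        · exact hva.symm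
        · exact hpa.symm
        · exact absurd rfl hij
        · exact hab
        · exact hac
        · exact hvb.symm
        · exact hpb.symm
        · exact hab.symm
        · exact absurd rfl hij
        · exact hbc
        · exact hvc.symm
        · exact hpc.symm
        · exact hac.symm
        · exact hbc.symm
        · exact absurd rfl hij
    · -- b and c not adjacent : then b–d and c–d are edges
      have hbd : G.Adj b d := by
        by_contra hnbd
        have hsub : (t.erase p).filter (fun w => G.Adj b w) ⊆ {a} := by
          intro z hz
          obtain ⟨hzM, hzadj⟩ := Finset.mem_filter.mp hz
          rw [hMeq] at hzM
          simp only [Finset.mem_insert, Finset.mem_singleton] at hzM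
          rcases hzM with h | h | h | h
          · rw [h]; exact Finset.mem_singleton_self _
          · rw [h] at hzadj; exact absurd hzadj (G.irrefl)
          · rw [h] at hzadj; exact absurd hzadj hbc
          · rw [h] at hzadj; exact absurd hzadj hnbd
        have := Finset.card_le_card hsub
        have := hM2 b hbM
        simp only [Finset.card_singleton] at *
        omega
      have hcd : G.Adj c d := by
        by_contra hncd
        have hsub : (t.erase p).filter (fun w => G.Adj c w) ⊆ {a} := by
          intro z hz
          obtain ⟨hzM, hzadj⟩ := Finset.mem_filter.mp hz
          rw [hMeq] at hzM
          simp only [Finset.mem_insert, Finset.mem_singleton] at hzM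
          rcases hzM with h | h | h | h
          · rw [h]; exact Finset.mem_singleton_self _
          · rw [h] at hzadj; exact absurd hzadj (fun hh => hbc hh.symm)
          · rw [h] at hzadj; exact absurd hzadj (G.irrefl)
          · rw [h] at hzadj; exact absurd hzadj hncd
        have := Finset.card_le_card hsub
        have := hM2 c hcM
        simp only [Finset.card_singleton] at *
        omega
      -- need v, p, a, b distinct from each other and from c, d
      have hvp' : v ≠ p := fun e => hvt (e ▸ hpt)
      have hva' : v ≠ a := fun e => hvt (e ▸ hat)
      have hvb' : v ≠ b := fun e => hvt (e ▸ hbt)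
      have hvc' : v ≠ c := fun e => hvt (e ▸ hct)
      have hvd' : v ≠ d := fun e => hvt (e ▸ hdt)
      refine ⟨![{v}, {p}, {a}, {b}, {c, d}], ?_, ?_, ?_, ?_, ?_⟩
      · have sing_sub : ∀ x : V, x ∈ s → ({x} : Finset V) ⊆ s := by
          intro x hx z hz
          rw [Finset.mem_singleton] at hz; rw [hz]; exact hx
        intro i
        fin_cases i
        · exact sing_sub v hvs
        · exact sing_sub p (hts hpt)
        · exact sing_sub a (hts hat)
        · exact sing_sub b (hts hbt)
        · show ({c, d} : Finset V) ⊆ s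
          intro z hz
          rcases Finset.mem_insert.mp hz with h | hz'
          · rw [h]; exact hts hct
          · rw [Finset.mem_singleton] at hz'; rw [hz']; exact hts hdt
      · intro i
        fin_cases i
        · exact ⟨v, Finset.mem_singleton_self _⟩
        · exact ⟨p, Finset.mem_singleton_self _⟩
        · exact ⟨a, Finset.mem_singleton_self _⟩
        · exact ⟨b, Finset.mem_singleton_self _⟩
        · exact ⟨c, Finset.mem_insert_self _ _⟩
      · intro i
        fin_cases i
        · show (G.induce (↑({v} : Finset V) : Set V)).Connected
          rw [Finset.coe_singleton]; exact conn_singleton G v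
        · show (G.induce (↑({p} : Finset V) : Set V)).Connected
          rw [Finset.coe_singleton]; exact conn_singleton G p
        · show (G.induce (↑({a} : Finset V) : Set V)).Connected
          rw [Finset.coe_singleton]; exact conn_singleton G a
        · show (G.induce (↑({b} : Finset V) : Set V)).Connected
          rw [Finset.coe_singleton]; exact conn_singleton G b
        · show (G.induce (↑({c, d} : Finset V) : Set V)).Connected
          have hcoe : ((({c, d} : Finset V) : Set V)) = ({c, d} : Set V) := by simp
          rw [hcoe]
          exact conn_pair G hcd
      · intro i j hij
        have DD : ∀ (x y : V), x ≠ y → Disjoint ({x} : Finset V) {y} :=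
          fun x y h => Finset.disjoint_singleton.mpr h
        have D4 : ∀ x : V, x ≠ c → x ≠ d → Disjoint ({x} : Finset V) ({c, d} : Finset V) := by
          intro x h1 h2
          rw [Finset.disjoint_insert_right]
          exact ⟨by simp [Ne.symm h1], Finset.disjoint_singleton.mpr h2⟩
        fin_cases i <;> fin_cases j
        · exact absurd rfl hij
        · exact DD v p hvp'
        · exact DD v a hva'
        · exact DD v b hvb'
        · exact D4 v hvc' hvd'
        · exact DD p v (Ne.symm hvp')
        · exact absurd rfl hij
        · exact DD p a (Ne.symm hap)
        · exact DD p b (Ne.symm hbp)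
        · exact D4 p (Ne.symm hcp) (Ne.symm hdp)
        · exact DD a v (Ne.symm hva')
        · exact DD a p hap
        · exact absurd rfl hij
        · exact DD a b (Ne.symm hba)
        · exact D4 a (Ne.symm hca) (Ne.symm hda)
        · exact DD b v (Ne.symm hvb')
        · exact DD b p hbp
        · exact DD b a hba
        · exact absurd rfl hij
        · exact D4 b (Ne.symm hcb) (Ne.symm hdb)
        · exact (D4 v hvc' hvd').symm
        · exact (D4 p (Ne.symm hcp) (Ne.symm hdp)).symm
        · exact (D4 a (Ne.symm hca) (Ne.symm hda)).symm
        · exact (D4 b (Ne.symm hcb) (Ne.symm hdb)).symm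
        · exact absurd rfl hij
      · intro i j hij
        have mcd : c ∈ ({c, d} : Finset V) := Finset.mem_insert_self _ _
        have mdcd : d ∈ ({c, d} : Finset V) := by simp
        have ms : ∀ x : V, x ∈ ({x} : Finset V) := fun x => Finset.mem_singleton_self x
        fin_cases i <;> fin_cases j
        · exact absurd rfl hij
        · exact ⟨v, ms v, p, ms p, hvp⟩
        · exact ⟨v, ms v, a, ms a, hva⟩
        · exact ⟨v, ms v, b, ms b, hvb⟩
        · exact ⟨v, ms v, c, mcd, hvc⟩
        · exact ⟨p, ms p, v, ms v, hvp.symm⟩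
        · exact absurd rfl hij
        · exact ⟨p, ms p, a, ms a, hpa⟩
        · exact ⟨p, ms p, b, ms b, hpb⟩
        · exact ⟨p, ms p, c, mcd, hpc⟩
        · exact ⟨a, ms a, v, ms v, hva.symm⟩
        · exact ⟨a, ms a, p, ms p, hpa.symm⟩
        · exact absurd rfl hij
        · exact ⟨a, ms a, b, ms b, hab⟩
        · exact ⟨a, ms a, c, mcd, hac⟩
        · exact ⟨b, ms b, v, ms v, hvb.symm⟩
        · exact ⟨b, ms b, p, ms p, hpb.symm⟩
        · exact ⟨b, ms b, a, ms a, hab.symm⟩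
        · exact absurd rfl hij
        · exact ⟨b, ms b, d, mdcd, hbd⟩
        · exact ⟨c, mcd, v, ms v, hvc.symm⟩
        · exact ⟨c, mcd, p, ms p, hpc.symm⟩
        · exact ⟨c, mcd, a, ms a, hac.symm⟩
        · exact ⟨d, mdcd, b, ms b, hbd.symm⟩
        · exact absurd rfl hij

end
end PPlanar
namespace PPlanar
noncomputable section
open Finset SimpleGraph Classical

variable {V : Type*}

theorem L5 (N : ℕ) : ∀ (E : ℕ) (G : SimpleGraph V) (s : Finset V),
    s.card = N → eS G s = E → 3 ≤ N → 6 * N ≤ E + 10 → MinorW G s := by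
  induction N using Nat.strong_induction_on with
  | _ N ihN =>
  intro E
  induction E using Nat.strong_induction_on with
  | _ E ihE =>
  intro G s hcard hE h3 hbound
  by_cases htrim : E + 9 ≤ 6 * N
  · -- no trimming needed: there is a vertex of degree at most 5
    have hlow : ∃ v ∈ s, degS G s v ≤ 5 := by
      by_contra h
      push_neg at h
      have h6 : 6 * N ≤ E := by
        have : ∑ v ∈ s, 6 ≤ ∑ v ∈ s, degS G s v :=
          Finset.sum_le_sum (fun v hv => h v hv)
        rw [Finset.sum_const, hcard, smul_eq_mul] at this
        rw [← hE]
        unfold eS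
        omega
      omega
    by_cases hdel3 : ∃ v ∈ s, degS G s v ≤ 3
    · -- delete a vertex of degree at most 3
      obtain ⟨v, hvs, hv3⟩ := hdel3
      have hN4 : 4 ≤ N := by
        by_contra hN
        have hN3 : N = 3 := by omega
        have hsmall : ∀ u ∈ s, degS G s u ≤ 2 := by
          intro u hu
          have := degS_lt_card (G := G) hu
          omega
        have : eS G s ≤ ∑ u ∈ s, 2 := Finset.sum_le_sum hsmall
        rw [Finset.sum_const, hcard, smul_eq_mul] at this
        omega
      have herase := eS_erase G hvs
      have hres := ihN (N - 1) (by omega) (eS G (s.erase v)) G (s.erase v)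
        (by rw [Finset.card_erase_of_mem hvs, hcard]) rfl (by omega) (by omega)
      exact hres.mono_set (Finset.erase_subset _ _)
    · push_neg at hdel3
      by_cases hcon : ∃ x ∈ s, ∃ y ∈ s, G.Adj x y ∧
          (s.filter (fun u => G.Adj x u ∧ G.Adj y u)).card ≤ 2
      · -- contract an edge whose ends have few common neighbours
        obtain ⟨x, hxs, y, hys, hadjxy, hc2⟩ := hcon
        have hN5 : 5 ≤ N := by
          have h4 := hdel3 x hxs
          have := degS_lt_card (G := G) hxs
          omega
        have hcon2 := eS_conG G hxs hys hadjxy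
        have hres := ihN (N - 1) (by omega) (eS (conG G x y) (s.erase y)) (conG G x y)
          (s.erase y) (by rw [Finset.card_erase_of_mem hys, hcard]) rfl (by omega) (by omega)
        exact minorW_conG hadjxy hxs hys hres
      · -- every edge of s has at least 3 common neighbours in s
        push_neg at hcon
        obtain ⟨v, hvs, hv5⟩ := hlow
        have hv4 := hdel3 v hvs
        apply minorW_core (t := s.filter (fun u => G.Adj v u)) hvs (Finset.filter_subset _ _)
        · intro hmem
          exact G.irrefl (Finset.mem_filter.mp hmem).2
        · intro u hu
          exact (Finset.mem_filter.mp hu).2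
        · unfold degS at hv4 hv5
          omega
        · intro u hu
          obtain ⟨hus, hadjvu⟩ := Finset.mem_filter.mp hu
          have h3c := hcon u hus v hvs hadjvu.symm
          refine le_trans h3c (Finset.card_le_card ?_)
          intro z hz
          obtain ⟨hzs, hzu, hzv⟩ : z ∈ s ∧ G.Adj u z ∧ G.Adj v z := by
            have := Finset.mem_filter.mp hz
            exact ⟨this.1, this.2.1, this.2.2⟩
          exact Finset.mem_filter.mpr ⟨Finset.mem_filter.mpr ⟨hzs, hzv⟩, hzu⟩
  · -- trim an edge
    push_neg at htrim
    have hEpos : 0 < E := by omega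
    have hvex : ∃ v ∈ s, 0 < degS G s v := by
      by_contra h
      push_neg at h
      have : eS G s = 0 := Finset.sum_eq_zero (fun v hv => by have := h v hv; omega)
      omega
    obtain ⟨x, hxs, hxdeg⟩ := hvex
    obtain ⟨y, hy⟩ := Finset.card_pos.mp hxdeg
    have hys : y ∈ s := (Finset.mem_filter.mp hy).1
    have hadjxy : G.Adj x y := (Finset.mem_filter.mp hy).2
    have hdel := eS_deleteEdge G hxs hys hadjxy
    have hres := ihE (E - 2) (by omega) (G.deleteEdges {s(x, y)}) s hcard (by omega)
      h3 (by omega)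
    exact hres.mono_graph (SimpleGraph.deleteEdges_le _)

end
end PPlanar
namespace PPlanar
noncomputable section
open Finset SimpleGraph Classical

variable {V : Type*}

lemma exists_low_deg {W : Type*} [Fintype W] [Nonempty W] (H : SimpleGraph W)
    (h5 : ¬ IsMinor K5 H) : ∃ v : W, degS H Finset.univ v ≤ 5 := by
  by_contra h
  push_neg at h
  set N := (Finset.univ : Finset W).card with hN
  have hN7 : 7 ≤ N := by
    have v0 : W := Classical.arbitrary W
    have h6 := h v0
    have := degS_lt_card (G := H) (Finset.mem_univ v0)
    omega
  have hsum : 6 * N ≤ eS H Finset.univ := by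
    have : ∑ v ∈ (Finset.univ : Finset W), 6 ≤ ∑ v ∈ (Finset.univ : Finset W), degS H Finset.univ v :=
      Finset.sum_le_sum (fun v _ => h v)
    rw [Finset.sum_const, smul_eq_mul] at this
    unfold eS
    omega
  have := (L5 N (eS H Finset.univ) H Finset.univ rfl rfl (by omega) (by omega)).isMinor
  exact h5 this

end
end PPlanar

theorem stmt_7 {V : Type*} [Fintype V] (G : SimpleGraph V) (hG : Planar G) :
    PseudoPlanar G := by
  intro S hS
  constructor
  · -- δ* ≤ 5
    intro hne
    have hinst : Nonempty ↥(locSet G S) := hne.to_subtype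
    have hnoK5 : ¬ IsMinor K5 (locG G S) := by
      intro h
      exact hG.1 (PPlanar.isMinor_of_induce h)
    obtain ⟨v, hv⟩ := PPlanar.exists_low_deg (locG G S) hnoK5
    refine ⟨v, le_trans ?_ hv⟩
    apply Finset.card_le_card
    intro u hu
    have := Finset.mem_filter.mp hu
    exact Finset.mem_filter.mpr ⟨Finset.mem_univ u, this.2.1⟩
  · -- not the join of two 2K₂'s
    refine ⟨fun iso => ?_⟩
    have hK33join : IsMinor K33 (joinG twoK2 twoK2) := by
      refine ⟨fun u => {Sum.map (Fin.castLE (by norm_num)) (Fin.castLE (by norm_num)) u},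
        fun u => Set.singleton_nonempty _, fun u => PPlanar.conn_singleton _ _, ?_, ?_⟩
      · intro u w huw
        rw [Set.disjoint_singleton]
        intro hcon
        apply huw
        have hinj : Function.Injective
            (Sum.map (Fin.castLE (by norm_num : (3:ℕ) ≤ 4)) (Fin.castLE (by norm_num : (3:ℕ) ≤ 4))) :=
          Sum.map_injective.mpr ⟨fun a b hab => Fin.castLE_injective _ hab,
            fun a b hab => Fin.castLE_injective _ hab⟩
        exact hinj hcon
      · intro u w huw
        rcases u with i | i <;> rcases w with j | j
        · exfalso; simp [K33, completeBipartiteGraph] at huw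
        · exact ⟨Sum.inl (Fin.castLE (by norm_num) i), rfl,
            Sum.inr (Fin.castLE (by norm_num) j), rfl, trivial⟩
        · exact ⟨Sum.inr (Fin.castLE (by norm_num) i), rfl,
            Sum.inl (Fin.castLE (by norm_num) j), rfl, trivial⟩
        · exfalso; simp [K33, completeBipartiteGraph] at huw
    have h1 : IsMinor K33 (locG G S) := PPlanar.isMinor_map iso.symm.toEmbedding hK33join
    exact hG.2 (PPlanar.isMinor_of_induce h1)
end

section
/- Let H be a graph in W₂ without isolated vertices, let x be a vertex of H, and let G be obtained from H by adding three new vertices a, b, c, joining a to b and to every neighbor of x, joining b to c, and joining c to x. Then α(G) = α(H) + 1, and G is well-covered. -/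
open Finset
open Classical

section auxproof

open Finset

variable {W : Type*} [Fintype W]

lemma mem_indepC' {G : SimpleGraph W} {s : Finset W} :
    s ∈ indepC G ↔ ∀ a ∈ s, ∀ b ∈ s, ¬ G.Adj a b := by
  simp [indepC]

lemma card_le_indNum' {G : SimpleGraph W} {s : Finset W} (h : s ∈ indepC G) :
    s.card ≤ indNum G := Finset.le_sup h

lemma exists_maximal_superset' (G : SimpleGraph W) {s : Finset W} (hs : s ∈ indepC G) :
    ∃ t ∈ indepC G, s ⊆ t ∧ ∀ r ∈ indepC G, t ⊆ r → t = r := by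
  classical
  obtain ⟨t, ht, hmax⟩ := Finset.exists_max_image ((indepC G).filter (fun t => s ⊆ t))
    Finset.card ⟨s, by simp [hs]⟩
  simp only [Finset.mem_filter] at ht
  refine ⟨t, ht.1, ht.2, fun r hr htr => Finset.eq_of_subset_of_card_le htr ?_⟩
  exact hmax r (Finset.mem_filter.2 ⟨hr, ht.2.trans htr⟩)

lemma sat_card' {G : SimpleGraph W} (hG : WellCovered G) {s : Finset W}
    (hs : s ∈ indepC G) (hsat : ∀ u, u ∉ s → ∃ w ∈ s, G.Adj u w) :
    s.card = indNum G := by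
  refine hG s hs fun t ht hst => Finset.Subset.antisymm hst fun u hu => ?_
  by_contra hus
  obtain ⟨w, hw, hadj⟩ := hsat u hus
  exact mem_indepC'.1 ht u hu w (hst hw) hadj

lemma max_sat' {G : SimpleGraph W} {s : Finset W} (hs : s ∈ indepC G)
    (hmax : ∀ t ∈ indepC G, s ⊆ t → s = t) :
    ∀ u, u ∉ s → ∃ w ∈ s, G.Adj u w := by
  intro u hu
  by_contra h
  push_neg at h
  have hins : insert u s ∈ indepC G := by
    rw [mem_indepC']
    intro p hp q hq
    rcases Finset.mem_insert.1 hp with rfl | hp'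
    · rcases Finset.mem_insert.1 hq with rfl | hq'
      · exact G.irrefl
      · exact h q hq'
    · rcases Finset.mem_insert.1 hq with rfl | hq'
      · exact fun hadj => h p hp' hadj.symm
      · exact mem_indepC'.1 hs p hp' q hq' 
  have := hmax _ hins (Finset.subset_insert _ _)
  exact hu (this ▸ Finset.mem_insert_self u s)

variable {V : Type*}

/-- The underlying relation of `extGraph`. -/
def extRel (H : SimpleGraph V) (x : V) : V ⊕ Fin 3 → V ⊕ Fin 3 → Prop :=
  fun p q =>
    match p, q with
    | Sum.inl u, Sum.inl w => H.Adj u w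
    | Sum.inl u, Sum.inr i => (i = 0 ∧ H.Adj u x) ∨ (i = 2 ∧ u = x)
    | Sum.inr i, Sum.inr j => (i = 0 ∧ j = 1) ∨ (i = 1 ∧ j = 2)
    | Sum.inr _, Sum.inl _ => False

lemma ext_adj {H : SimpleGraph V} {x : V} {p q : V ⊕ Fin 3} :
    (extGraph H x).Adj p q ↔ p ≠ q ∧ (extRel H x p q ∨ extRel H x q p) :=
  SimpleGraph.fromRel_adj _ _ _

lemma ext_adj_ll {H : SimpleGraph V} {x u w : V} :
    (extGraph H x).Adj (Sum.inl u) (Sum.inl w) ↔ H.Adj u w := by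
  rw [ext_adj]
  constructor
  · rintro ⟨-, h | h⟩
    · exact h
    · exact h.symm
  · intro h
    exact ⟨fun e => h.ne (Sum.inl_injective e), Or.inl h⟩

lemma ext_adj_lr {H : SimpleGraph V} {x u : V} {i : Fin 3} :
    (extGraph H x).Adj (Sum.inl u) (Sum.inr i) ↔ (i = 0 ∧ H.Adj u x) ∨ (i = 2 ∧ u = x) := by
  rw [ext_adj]
  constructor
  · rintro ⟨-, h | h⟩
    · exact h
    · exact h.elim
  · intro h
    exact ⟨fun e => by simp at e, Or.inl h⟩

lemma ext_adj_rl {H : SimpleGraph V} {x u : V} {i : Fin 3} :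
    (extGraph H x).Adj (Sum.inr i) (Sum.inl u) ↔ (i = 0 ∧ H.Adj u x) ∨ (i = 2 ∧ u = x) := by
  rw [(extGraph H x).adj_comm]
  exact ext_adj_lr

lemma ext_adj_ab {H : SimpleGraph V} {x : V} :
    (extGraph H x).Adj (Sum.inr 0) (Sum.inr 1) :=
  ext_adj.2 ⟨fun e => absurd (Sum.inr_injective e) (by decide), Or.inl (Or.inl ⟨rfl, rfl⟩)⟩

lemma ext_adj_bc {H : SimpleGraph V} {x : V} :
    (extGraph H x).Adj (Sum.inr 1) (Sum.inr 2) :=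
  ext_adj.2 ⟨fun e => absurd (Sum.inr_injective e) (by decide), Or.inl (Or.inr ⟨rfl, rfl⟩)⟩

lemma gdel_adj {H : SimpleGraph V} {v : V} {a b : {u : V // u ≠ v}} :
    (Gdel H v).Adj a b ↔ H.Adj a.1 b.1 := Iff.rfl

end auxproof


theorem stmt_19 {V : Type*} [Fintype V] (H : SimpleGraph V) (hW2 : InW2 H)
    (hni : ∀ v : V, ∃ u, H.Adj v u) (x : V) :
    indNum (extGraph H x) = indNum H + 1 ∧ WellCovered (extGraph H x) := by
  classical
  -- upper bound: every independent set of the extension has card ≤ α + 1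
  have hub : ∀ I ∈ indepC (extGraph H x), I.card ≤ indNum H + 1 := by
    intro I hI
    have hind := mem_indepC'.1 hI
    have hJind : I.toLeft ∈ indepC H := by
      rw [mem_indepC']
      intro u hu w hw hadj
      exact hind _ (Finset.mem_toLeft.1 hu) _ (Finset.mem_toLeft.1 hw) (ext_adj_ll.2 hadj)
    have hcard : I.toLeft.card + I.toRight.card = I.card :=
      Finset.card_toLeft_add_card_toRight
    have hJle : I.toLeft.card ≤ indNum H := card_le_indNum' hJind
    by_cases h02 : (0 : Fin 3) ∈ I.toRight ∧ (2 : Fin 3) ∈ I.toRight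
    · have h0 : (Sum.inr 0 : V ⊕ Fin 3) ∈ I := Finset.mem_toRight.1 h02.1
      have h2 : (Sum.inr 2 : V ⊕ Fin 3) ∈ I := Finset.mem_toRight.1 h02.2
      have h1R : (1 : Fin 3) ∉ I.toRight := fun h1 =>
        hind _ h0 _ (Finset.mem_toRight.1 h1) ext_adj_ab
      have hxJ : x ∉ I.toLeft := fun hx =>
        hind _ (Finset.mem_toLeft.1 hx) _ h2 (ext_adj_lr.2 (Or.inr ⟨rfl, rfl⟩))
      have hKind : insert x I.toLeft ∈ indepC H := by
        rw [mem_indepC']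
        intro p hp q hq hadj
        rcases Finset.mem_insert.1 hp with rfl | hp'
        · rcases Finset.mem_insert.1 hq with rfl | hq'
          · exact H.irrefl hadj
          · exact hind _ (Finset.mem_toLeft.1 hq') _ h0
              (ext_adj_lr.2 (Or.inl ⟨rfl, hadj.symm⟩))
        · rcases Finset.mem_insert.1 hq with rfl | hq'
          · exact hind _ (Finset.mem_toLeft.1 hp') _ h0
              (ext_adj_lr.2 (Or.inl ⟨rfl, hadj⟩))
          · exact hind _ (Finset.mem_toLeft.1 hp') _ (Finset.mem_toLeft.1 hq') (ext_adj_ll.2 hadj)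
      have hK : I.toLeft.card + 1 ≤ indNum H := by
        have := card_le_indNum' hKind
        rwa [Finset.card_insert_of_notMem hxJ] at this
      have hsub : I.toRight ⊆ ({0, 2} : Finset (Fin 3)) := by
        intro i hi
        fin_cases i
        · simp
        · exact absurd hi h1R
        · simp
      have hR2 : I.toRight.card ≤ 2 := le_trans (Finset.card_le_card hsub) (by decide)
      omega
    · have hR1 : I.toRight.card ≤ 1 := by
        by_cases h1 : (1 : Fin 3) ∈ I.toRight
        · have h0 : (0 : Fin 3) ∉ I.toRight := fun h0 =>
            hind _ (Finset.mem_toRight.1 h0) _ (Finset.mem_toRight.1 h1) ext_adj_ab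
          have h2 : (2 : Fin 3) ∉ I.toRight := fun h2 =>
            hind _ (Finset.mem_toRight.1 h1) _ (Finset.mem_toRight.1 h2) ext_adj_bc
          have hsub : I.toRight ⊆ ({1} : Finset (Fin 3)) := by
            intro i hi
            fin_cases i
            · exact absurd hi h0
            · simp
            · exact absurd hi h2
          exact le_trans (Finset.card_le_card hsub) (by decide)
        · by_cases h0 : (0 : Fin 3) ∈ I.toRight
          · have hsub : I.toRight ⊆ ({0} : Finset (Fin 3)) := by
              intro i hi
              fin_cases i
              · simp
              · exact absurd hi h1
              · exact absurd (⟨h0, hi⟩ : _ ∧ _) h02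
            exact le_trans (Finset.card_le_card hsub) (by decide)
          · have hsub : I.toRight ⊆ ({2} : Finset (Fin 3)) := by
              intro i hi
              fin_cases i
              · exact absurd hi h0
              · exact absurd hi h1
              · simp
            exact le_trans (Finset.card_le_card hsub) (by decide)
      omega
  -- lower bound witness
  have hsingle : ({x} : Finset V) ∈ indepC H := by
    rw [mem_indepC']
    intro a ha b hb
    rw [Finset.mem_singleton] at ha hb
    subst ha; subst hb
    exact H.irrefl
  obtain ⟨S, hS, hxS, hSmax⟩ := exists_maximal_superset' H hsingle
  have hScard : S.card = indNum H := hW2.1 S hS hSmax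
  have hxmem : x ∈ S := hxS (Finset.mem_singleton_self x)
  have hSind := mem_indepC'.1 hS
  set T : Finset (V ⊕ Fin 3) :=
    insert (Sum.inr 0) (S.map ⟨Sum.inl, Sum.inl_injective⟩) with hT
  have hTind : T ∈ indepC (extGraph H x) := by
    rw [mem_indepC']
    intro p hp q hq hadj
    rw [hT, Finset.mem_insert] at hp hq
    rcases hp with rfl | hp <;> rcases hq with rfl | hq
    · exact (extGraph H x).irrefl hadj
    · obtain ⟨w, hw, rfl⟩ := Finset.mem_map.1 hq
      rcases ext_adj_rl.1 hadj with ⟨-, hwx⟩ | ⟨h2, -⟩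
      · exact hSind w hw x hxmem hwx
      · simp at h2
    · obtain ⟨w, hw, rfl⟩ := Finset.mem_map.1 hp
      rcases ext_adj_lr.1 hadj with ⟨-, hwx⟩ | ⟨h2, -⟩
      · exact hSind w hw x hxmem hwx
      · simp at h2
    · obtain ⟨w, hw, rfl⟩ := Finset.mem_map.1 hp
      obtain ⟨w', hw', rfl⟩ := Finset.mem_map.1 hq
      exact hSind w hw w' hw' (ext_adj_ll.1 hadj)
  have hTcard : T.card = indNum H + 1 := by
    rw [hT, Finset.card_insert_of_notMem (by simp), Finset.card_map, hScard]
  have hnum : indNum (extGraph H x) = indNum H + 1 :=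
    le_antisymm (Finset.sup_le hub) (hTcard ▸ card_le_indNum' hTind)
  refine ⟨hnum, ?_⟩
  -- well-coveredness
  intro I hI hImax
  rw [hnum]
  have hind := mem_indepC'.1 hI
  have hsat := max_sat' hI hImax
  have hJind : I.toLeft ∈ indepC H := by
    rw [mem_indepC']
    intro u hu w hw hadj
    exact hind _ (Finset.mem_toLeft.1 hu) _ (Finset.mem_toLeft.1 hw) (ext_adj_ll.2 hadj)
  have hcard : I.toLeft.card + I.toRight.card = I.card :=
    Finset.card_toLeft_add_card_toRight
  by_cases h1 : (1 : Fin 3) ∈ I.toRight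
  · -- b ∈ I : I.toLeft is a maximal independent set of H
    have h0 : (0 : Fin 3) ∉ I.toRight := fun h0 =>
      hind _ (Finset.mem_toRight.1 h0) _ (Finset.mem_toRight.1 h1) ext_adj_ab
    have h2 : (2 : Fin 3) ∉ I.toRight := fun h2 =>
      hind _ (Finset.mem_toRight.1 h1) _ (Finset.mem_toRight.1 h2) ext_adj_bc
    have hsatJ : ∀ u, u ∉ I.toLeft → ∃ w ∈ I.toLeft, H.Adj u w := by
      intro u hu
      by_contra hno
      push_neg at hno
      obtain ⟨q, hq, hadj⟩ := hsat (Sum.inl u) (fun h => hu (Finset.mem_toLeft.2 h))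
      rcases q with w | i
      · exact hno w (Finset.mem_toLeft.2 hq) (ext_adj_ll.1 hadj)
      · rcases ext_adj_lr.1 hadj with ⟨rfl, -⟩ | ⟨rfl, -⟩
        · exact h0 (Finset.mem_toRight.2 hq)
        · exact h2 (Finset.mem_toRight.2 hq)
    have hJcard : I.toLeft.card = indNum H := sat_card' hW2.1 hJind hsatJ
    have hRcard : I.toRight.card = 1 := by
      have hsub : I.toRight ⊆ ({1} : Finset (Fin 3)) := by
        intro i hi
        fin_cases i
        · exact absurd hi h0
        · simp
        · exact absurd hi h2
      have := Finset.card_le_card hsub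
      have hpos : 0 < I.toRight.card := Finset.card_pos.2 ⟨1, h1⟩
      simp at this
      omega
    omega
  · by_cases h0 : (0 : Fin 3) ∈ I.toRight
    · have ha : (Sum.inr 0 : V ⊕ Fin 3) ∈ I := Finset.mem_toRight.1 h0
      by_cases h2 : (2 : Fin 3) ∈ I.toRight
      · -- a, c ∈ I
        have hc : (Sum.inr 2 : V ⊕ Fin 3) ∈ I := Finset.mem_toRight.1 h2
        have hxJ : x ∉ I.toLeft := fun hx =>
          hind _ (Finset.mem_toLeft.1 hx) _ hc (ext_adj_lr.2 (Or.inr ⟨rfl, rfl⟩))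
        have hKind : insert x I.toLeft ∈ indepC H := by
          rw [mem_indepC']
          intro p hp q hq hadj
          rcases Finset.mem_insert.1 hp with rfl | hp'
          · rcases Finset.mem_insert.1 hq with rfl | hq'
            · exact H.irrefl hadj
            · exact hind _ (Finset.mem_toLeft.1 hq') _ ha
                (ext_adj_lr.2 (Or.inl ⟨rfl, hadj.symm⟩))
          · rcases Finset.mem_insert.1 hq with rfl | hq'
            · exact hind _ (Finset.mem_toLeft.1 hp') _ ha
                (ext_adj_lr.2 (Or.inl ⟨rfl, hadj⟩))
            · exact hind _ (Finset.mem_toLeft.1 hp') _ (Finset.mem_toLeft.1 hq')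
                (ext_adj_ll.2 hadj)
        have hsatK : ∀ u, u ∉ insert x I.toLeft → ∃ w ∈ insert x I.toLeft, H.Adj u w := by
          intro u hu
          rw [Finset.mem_insert] at hu
          push_neg at hu
          by_contra hno
          push_neg at hno
          obtain ⟨q, hq, hadj⟩ := hsat (Sum.inl u) (fun h => hu.2 (Finset.mem_toLeft.2 h))
          rcases q with w | i
          · exact hno w (Finset.mem_insert_of_mem (Finset.mem_toLeft.2 hq))
              (ext_adj_ll.1 hadj)
          · rcases ext_adj_lr.1 hadj with ⟨rfl, hux⟩ | ⟨rfl, rfl⟩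
            · exact hno x (Finset.mem_insert_self _ _) hux
            · exact hu.1 rfl
        have hKcard : (insert x I.toLeft).card = indNum H := sat_card' hW2.1 hKind hsatK
        rw [Finset.card_insert_of_notMem hxJ] at hKcard
        have hRcard : I.toRight.card = 2 := by
          have hsub : I.toRight ⊆ ({0, 2} : Finset (Fin 3)) := by
            intro i hi
            fin_cases i
            · simp
            · exact absurd hi h1
            · simp
          have hsub2 : ({0, 2} : Finset (Fin 3)) ⊆ I.toRight := by
            intro i hi
            simp only [Finset.mem_insert, Finset.mem_singleton] at hi
            rcases hi with rfl | rfl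
            · exact h0
            · exact h2
          rw [Finset.Subset.antisymm hsub hsub2]
          decide
        omega
      · -- only a ∈ I : then x ∈ I.toLeft and it is maximal in H
        have hcnot : (Sum.inr 2 : V ⊕ Fin 3) ∉ I := fun h => h2 (Finset.mem_toRight.2 h)
        have hxJ : x ∈ I.toLeft := by
          obtain ⟨q, hq, hadj⟩ := hsat (Sum.inr 2) hcnot
          rcases q with w | i
          · rcases ext_adj_rl.1 hadj with ⟨h20, -⟩ | ⟨-, rfl⟩
            · exact absurd h20 (by decide)
            · exact Finset.mem_toLeft.2 hq
          · exfalso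
            have hi := Finset.mem_toRight.2 hq
            obtain ⟨-, hrel | hrel⟩ := ext_adj.1 hadj
            · simp only [extRel] at hrel
              rcases hrel with ⟨h20, -⟩ | ⟨h21, -⟩
              · exact absurd h20 (by decide)
              · exact absurd h21 (by decide)
            · simp only [extRel] at hrel
              rcases hrel with ⟨-, h21⟩ | ⟨rfl, -⟩
              · exact absurd h21 (by decide)
              · exact h1 hi
        have hsatJ : ∀ u, u ∉ I.toLeft → ∃ w ∈ I.toLeft, H.Adj u w := by
          intro u hu
          by_contra hno
          push_neg at hno
          obtain ⟨q, hq, hadj⟩ := hsat (Sum.inl u) (fun h => hu (Finset.mem_toLeft.2 h))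
          rcases q with w | i
          · exact hno w (Finset.mem_toLeft.2 hq) (ext_adj_ll.1 hadj)
          · rcases ext_adj_lr.1 hadj with ⟨rfl, hux⟩ | ⟨rfl, rfl⟩
            · exact hno x hxJ hux
            · exact h2 (Finset.mem_toRight.2 hq)
        have hJcard : I.toLeft.card = indNum H := sat_card' hW2.1 hJind hsatJ
        have hRcard : I.toRight.card = 1 := by
          have hsub : I.toRight ⊆ ({0} : Finset (Fin 3)) := by
            intro i hi
            fin_cases i
            · simp
            · exact absurd hi h1
            · exact absurd hi h2
          have := Finset.card_le_card hsub
          have hpos : 0 < I.toRight.card := Finset.card_pos.2 ⟨0, h0⟩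
          simp at this
          omega
        omega
    · by_cases h2 : (2 : Fin 3) ∈ I.toRight
      · -- only c ∈ I : use the deletion H ∖ x
        have hc : (Sum.inr 2 : V ⊕ Fin 3) ∈ I := Finset.mem_toRight.1 h2
        have hxJ : x ∉ I.toLeft := fun hx =>
          hind _ (Finset.mem_toLeft.1 hx) _ hc (ext_adj_lr.2 (Or.inr ⟨rfl, rfl⟩))
        set J' : Finset {u : V // u ≠ x} := I.toLeft.subtype (· ≠ x) with hJ'
        have hJ'mem : ∀ u : {u : V // u ≠ x}, u ∈ J' ↔ u.1 ∈ I.toLeft := by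
          intro u
          rw [hJ', Finset.mem_subtype]
        have hJ'ind : J' ∈ indepC (Gdel H x) := by
          rw [mem_indepC']
          intro p hp q hq hadj
          exact mem_indepC'.1 hJind p.1 ((hJ'mem p).1 hp) q.1 ((hJ'mem q).1 hq)
            (gdel_adj.1 hadj)
        have hsatJ' : ∀ u, u ∉ J' → ∃ w ∈ J', (Gdel H x).Adj u w := by
          intro u hu
          rw [hJ'mem] at hu
          by_contra hno
          push_neg at hno
          obtain ⟨q, hq, hadj⟩ := hsat (Sum.inl u.1) (fun h => hu (Finset.mem_toLeft.2 h))
          rcases q with w | i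
          · have hw : w ∈ I.toLeft := Finset.mem_toLeft.2 hq
            have hwx : w ≠ x := fun e => hxJ (e ▸ hw)
            exact hno ⟨w, hwx⟩ ((hJ'mem _).2 hw) (gdel_adj.2 (ext_adj_ll.1 hadj))
          · rcases ext_adj_lr.1 hadj with ⟨rfl, -⟩ | ⟨rfl, hux⟩
            · exact h0 (Finset.mem_toRight.2 hq)
            · exact u.2 hux
        have hJ'card : J'.card = indNum (Gdel H x) :=
          sat_card' (hW2.2 x).1 hJ'ind hsatJ'
        rw [(hW2.2 x).2] at hJ'card
        have hJJ' : J'.card = I.toLeft.card := by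
          have hfe : I.toLeft.filter (fun u => u ≠ x) = I.toLeft :=
            Finset.filter_eq_self.2 (fun u hu e => hxJ (e ▸ hu))
          rw [hJ', Finset.card_subtype, hfe]
        have hRcard : I.toRight.card = 1 := by
          have hsub : I.toRight ⊆ ({2} : Finset (Fin 3)) := by
            intro i hi
            fin_cases i
            · exact absurd hi h0
            · exact absurd hi h1
            · simp
          have := Finset.card_le_card hsub
          have hpos : 0 < I.toRight.card := Finset.card_pos.2 ⟨2, h2⟩
          simp at this
          omega
        omega
      · -- no new vertex in I : contradiction via b
        exfalso
        obtain ⟨q, hq, hadj⟩ := hsat (Sum.inr 1) (fun h => h1 (Finset.mem_toRight.2 h))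
        rcases q with w | i
        · rcases ext_adj_rl.1 hadj with ⟨h10, -⟩ | ⟨h12, -⟩
          · exact absurd h10 (by decide)
          · exact absurd h12 (by decide)
        · have hi := Finset.mem_toRight.2 hq
          obtain ⟨-, hrel | hrel⟩ := ext_adj.1 hadj
          · simp only [extRel] at hrel
            rcases hrel with ⟨h10, -⟩ | ⟨-, rfl⟩
            · exact absurd h10 (by decide)
            · exact h2 hi
          · simp only [extRel] at hrel
            rcases hrel with ⟨rfl, -⟩ | ⟨-, h12⟩
            · exact h0 hi
            · exact absurd h12 (by decide)
end
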